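/- arXiv:1203.5547 — 5 statements merged into one kernel-verified Lean document; each statement's English description precedes it below -/
import Mathlib

section
/- Let x₁, x₂ ∈ ℂ² be unit vectors and let B₁, B₂ ∈ M₂(ℂ) be density matrices. Then ‖x₁x₁ᴴ − t·x₂x₂ᴴ‖₁ ≥ ‖B₁ − t·B₂‖₁ for all real t ≥ 0 if and only if |x₁ᴴx₂| ≤ ‖√B₁ · √B₂‖₁. -/
open Matrix
open scoped ComplexOrder

/-- The square root of a positive semidefinite matrix, as defined in the older Mathlib. -/
noncomputable def Matrix.PosSemidef.sqrt {n 𝕜 : Type*} [Fintype n] [RCLike 𝕜] [DecidableEq n]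
    {A : Matrix n n 𝕜} (hA : Matrix.PosSemidef A) : Matrix n n 𝕜 :=
  hA.1.eigenvectorUnitary.1 * diagonal ((↑) ∘ (√·) ∘ hA.1.eigenvalues) *
    (star hA.1.eigenvectorUnitary : Matrix n n 𝕜)

/-- The trace norm of a complex matrix: `tr √(XᴴX)`, the sum of singular values. -/
noncomputable def traceNorm {p q : ℕ} (X : Matrix (Fin p) (Fin q) ℂ) : ℝ :=
  ((Matrix.posSemidef_conjTranspose_mul_self X).sqrt.trace).re

lemma Matrix.PosSemidef.posSemidef_sqrt {n 𝕜 : Type*} [Fintype n] [RCLike 𝕜] [DecidableEq n]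
    {A : Matrix n n 𝕜} (hA : Matrix.PosSemidef A) : hA.sqrt.PosSemidef := by
  have hD : (diagonal ((↑) ∘ (√·) ∘ hA.1.eigenvalues) : Matrix n n 𝕜).PosSemidef :=
    PosSemidef.diagonal fun i => by
      simp only [Pi.zero_apply, Function.comp_apply]
      exact RCLike.ofReal_nonneg.mpr (Real.sqrt_nonneg _)
  have := hD.mul_mul_conjTranspose_same (hA.1.eigenvectorUnitary.1)
  unfold Matrix.PosSemidef.sqrt
  rwa [star_eq_conjTranspose]

lemma Matrix.PosSemidef.sqrt_mul_self {n 𝕜 : Type*} [Fintype n] [RCLike 𝕜] [DecidableEq n]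
    {A : Matrix n n 𝕜} (hA : Matrix.PosSemidef A) : hA.sqrt * hA.sqrt = A := by
  unfold Matrix.PosSemidef.sqrt
  conv_rhs => rw [hA.1.spectral_theorem, Unitary.conjStarAlgAut_apply]
  have hU : (star hA.1.eigenvectorUnitary : Matrix n n 𝕜) * hA.1.eigenvectorUnitary.1 = 1 :=
    Unitary.coe_star_mul_self _
  have hDD : (diagonal ((↑) ∘ (√·) ∘ hA.1.eigenvalues) : Matrix n n 𝕜) *
      diagonal ((↑) ∘ (√·) ∘ hA.1.eigenvalues) = diagonal (RCLike.ofReal ∘ hA.1.eigenvalues) := by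
    rw [diagonal_mul_diagonal]
    congr 1
    funext i
    simp only [Function.comp_apply]
    rw [← RCLike.ofReal_mul, Real.mul_self_sqrt (hA.eigenvalues_nonneg i)]
  calc _ = hA.1.eigenvectorUnitary.1 * diagonal ((↑) ∘ (√·) ∘ hA.1.eigenvalues) *
        ((star hA.1.eigenvectorUnitary : Matrix n n 𝕜) * hA.1.eigenvectorUnitary.1) *
        diagonal ((↑) ∘ (√·) ∘ hA.1.eigenvalues) *
        (star hA.1.eigenvectorUnitary : Matrix n n 𝕜) := by simp only [Matrix.mul_assoc]
    _ = _ := by rw [hU, Matrix.mul_one, ← hDD]; simp only [Matrix.mul_assoc]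

lemma trace_sq_fin_two (M : Matrix (Fin 2) (Fin 2) ℂ) :
    M.trace ^ 2 = (M * M).trace + 2 * M.det := by
  simp [Matrix.trace_fin_two, Matrix.det_fin_two, Matrix.mul_apply, Fin.sum_univ_two]
  ring

lemma psd_diag_nonneg {n : ℕ} {M : Matrix (Fin n) (Fin n) ℂ} (h : M.PosSemidef) (i : Fin n) :
    0 ≤ M i i := by
  have := h.dotProduct_mulVec_nonneg (Pi.single i 1)
  have hstar : star (Pi.single i (1:ℂ) : Fin n → ℂ) = Pi.single i 1 := by
    ext j; simp [Pi.single_apply, apply_ite (star : ℂ → ℂ)]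
  simpa [hstar, Matrix.mulVec_single, single_dotProduct] using this

lemma psd_trace_nonneg {n : ℕ} {M : Matrix (Fin n) (Fin n) ℂ} (h : M.PosSemidef) :
    0 ≤ M.trace :=
  Finset.sum_nonneg fun i _ => psd_diag_nonneg h i

lemma psd_det_nonneg {n : ℕ} {M : Matrix (Fin n) (Fin n) ℂ} (h : M.PosSemidef) :
    0 ≤ M.det := by
  rw [h.isHermitian.det_eq_prod_eigenvalues]
  norm_cast
  exact RCLike.ofReal_nonneg.mpr <| Finset.prod_nonneg fun i _ => h.eigenvalues_nonneg i

lemma complex_nonneg_eq {z : ℂ} (hz : 0 ≤ z) {a : ℝ} (ha : 0 ≤ a) (h : z * z = (a : ℂ) * a) :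
    z = (a : ℂ) := by
  obtain ⟨hre, him⟩ := Complex.nonneg_iff.mp hz
  have hz' : z = (z.re : ℂ) := Complex.ext rfl (by simp [← him])
  rw [hz'] at h ⊢
  norm_cast at h ⊢
  nlinarith

lemma complex_nonneg_re {z : ℂ} (hz : 0 ≤ z) : z = (z.re : ℂ) ∧ 0 ≤ z.re := by
  obtain ⟨hre, him⟩ := Complex.nonneg_iff.mp hz
  exact ⟨Complex.ext rfl (by simp [← him]), hre⟩

lemma traceNorm_eq_sqrt (X : Matrix (Fin 2) (Fin 2) ℂ) :
    traceNorm X = Real.sqrt (((Xᴴ * X).trace).re + 2 * ‖X.det‖) := by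
  have hA := Matrix.posSemidef_conjTranspose_mul_self X
  set S := hA.sqrt with hSdef
  have hS : S.PosSemidef := hA.posSemidef_sqrt
  have hSS : S * S = Xᴴ * X := hA.sqrt_mul_self
  obtain ⟨htr, htr0⟩ := complex_nonneg_re (psd_trace_nonneg hS)
  -- det S = |det X|
  have hdet : S.det = (‖X.det‖ : ℂ) := by
    apply complex_nonneg_eq (psd_det_nonneg hS) (norm_nonneg _)
    rw [← Matrix.det_mul, hSS, Matrix.det_mul, Matrix.det_conjTranspose]
    rw [mul_comm, Complex.star_def, Complex.mul_conj]
    push_cast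
    rw [← Complex.sq_norm]
    push_cast
    ring
  -- trace identity
  have hid : S.trace ^ 2 = (Xᴴ * X).trace + 2 * (‖X.det‖ : ℂ) := by
    rw [← hSS, ← hdet]; exact trace_sq_fin_two S
  have harg : ((Xᴴ * X).trace).re + 2 * ‖X.det‖ = S.trace.re ^ 2 := by
    have : (Xᴴ * X).trace = ((S.trace.re ^ 2 - 2 * ‖X.det‖ : ℝ) : ℂ) := by
      have h2 : (Xᴴ * X).trace = S.trace ^ 2 - 2 * (‖X.det‖ : ℂ) := by
        rw [hid]; ring
      rw [h2, htr]
      push_cast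
      simp only [Complex.ofReal_re]
    rw [this]
    rw [Complex.ofReal_re]
    ring
  have : traceNorm X = S.trace.re := rfl
  rw [this, harg, Real.sqrt_sq htr0]

lemma traceNorm_herm {X : Matrix (Fin 2) (Fin 2) ℂ} (hX : X.IsHermitian) {r d : ℝ}
    (htr : X.trace = (r : ℂ)) (hdet : X.det = (d : ℂ)) :
    traceNorm X = Real.sqrt (r ^ 2 - 2 * d + 2 * |d|) := by
  rw [traceNorm_eq_sqrt]
  congr 1
  have hXX : Xᴴ * X = X * X := by rw [hX.eq]
  have h2 : (X * X).trace = X.trace ^ 2 - 2 * X.det := by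
    rw [trace_sq_fin_two X]; ring
  rw [hXX, h2, htr, hdet]
  have : ((r : ℂ) ^ 2 - 2 * (d : ℂ)) = ((r ^ 2 - 2 * d : ℝ) : ℂ) := by push_cast; ring
  rw [this, Complex.ofReal_re, Complex.norm_real, Real.norm_eq_abs]

lemma det_sub_smul (A B : Matrix (Fin 2) (Fin 2) ℂ) (z : ℂ) :
    (A - z • B).det = A.det + z ^ 2 * B.det - z * (A.trace * B.trace - (A * B).trace) := by
  simp [Matrix.det_fin_two, Matrix.trace_fin_two, Matrix.mul_apply, Fin.sum_univ_two,
    Matrix.sub_apply, Matrix.smul_apply, smul_eq_mul]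
  ring

lemma lagrange (a0 a1 b0 b1 : ℂ) (h1 : star a0 * a0 + star a1 * a1 = 1)
    (h2 : star b0 * b0 + star b1 * b1 = 1) :
    (1 : ℂ) - (star a0 * b0 + star a1 * b1) * star (star a0 * b0 + star a1 * b1)
      = (a0 * b1 - a1 * b0) * star (a0 * b1 - a1 * b0) := by
  simp only [star_add, StarMul.star_mul, star_sub, star_star]
  linear_combination (-(star b0 * b0 + star b1 * b1)) * h1 - h2

lemma quad_iff {d₁ d₂ b : ℝ} (h₁ : 0 ≤ d₁) (h₂ : 0 ≤ d₂) :
    (∀ t : ℝ, 0 ≤ t → 0 ≤ d₂ * t ^ 2 + b * t + d₁) ↔ -2 * Real.sqrt (d₁ * d₂) ≤ b := by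
  have hs : Real.sqrt (d₁ * d₂) = Real.sqrt d₁ * Real.sqrt d₂ := Real.sqrt_mul h₁ d₂
  have hs₁ : Real.sqrt d₁ ^ 2 = d₁ := Real.sq_sqrt h₁
  have hs₂ : Real.sqrt d₂ ^ 2 = d₂ := Real.sq_sqrt h₂
  have hn₁ : 0 ≤ Real.sqrt d₁ := Real.sqrt_nonneg _
  have hn₂ : 0 ≤ Real.sqrt d₂ := Real.sqrt_nonneg _
  constructor
  · intro h
    by_contra hb
    push_neg at hb
    have hb0 : b < 0 := lt_of_lt_of_le hb (by nlinarith [Real.sqrt_nonneg (d₁ * d₂)])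
    rcases eq_or_lt_of_le h₂ with h₂e | h₂p
    · -- d₂ = 0
      have hb' : (0:ℝ) < -b := by linarith
      have ht0 : (0:ℝ) ≤ (d₁ + 1) / (-b) := le_of_lt (div_pos (by linarith) hb')
      have hval := h ((d₁ + 1) / (-b)) ht0
      rw [← h₂e] at hval
      have hkey : b * ((d₁ + 1) / (-b)) = -(d₁ + 1) := by rw [mul_div_assoc', div_neg, mul_div_cancel_left₀ _ hb0.ne]
      nlinarith
    · -- d₂ > 0
      have hb2 : 4 * d₁ * d₂ < b ^ 2 := by nlinarith [Real.sqrt_nonneg (d₁ * d₂), Real.sq_sqrt (mul_nonneg h₁ h₂)]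
      have ht0 : (0:ℝ) ≤ -b / (2 * d₂) := le_of_lt (div_pos (by linarith) (by linarith))
      have hval := h (-b / (2 * d₂)) ht0
      have hkey : d₂ * (-b / (2 * d₂)) ^ 2 + b * (-b / (2 * d₂)) + d₁ = d₁ - b ^ 2 / (4 * d₂) := by
        field_simp
        ring
      rw [hkey] at hval
      have : b ^ 2 / (4 * d₂) ≤ d₁ := by linarith
      rw [div_le_iff₀ (by positivity)] at this
      nlinarith
  · intro hb t ht
    nlinarith [sq_nonneg (Real.sqrt d₂ * t - Real.sqrt d₁), mul_nonneg ht (by nlinarith [Real.sqrt_nonneg (d₁*d₂)] : (0:ℝ) ≤ b + 2 * Real.sqrt (d₁ * d₂))]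

lemma herm_sub_smul {A B : Matrix (Fin 2) (Fin 2) ℂ} (hA : A.IsHermitian) (hB : B.IsHermitian)
    (t : ℝ) : (A - (t : ℂ) • B).IsHermitian := by
  have : ((t : ℂ) • B).IsHermitian := by
    show ((t : ℂ) • B)ᴴ = _
    rw [Matrix.conjTranspose_smul, hB.eq, Complex.star_def, Complex.conj_ofReal]
  exact hA.sub this

lemma herm_vecMulVec (x : Fin 2 → ℂ) : (vecMulVec x (star x)).IsHermitian := by
  show _ᴴ = _
  ext i j
  simp [Matrix.conjTranspose_apply, Matrix.vecMulVec_apply, StarMul.star_mul, star_star]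


/-- For unit vectors `x₁, x₂ ∈ ℂ²` and qubit density matrices `B₁, B₂`:
`‖x₁x₁ᴴ - t x₂x₂ᴴ‖₁ ≥ ‖B₁ - t B₂‖₁` for all `t ≥ 0` iff `|x₁ᴴx₂| ≤ ‖√B₁ √B₂‖₁`. -/
theorem stmt_2 (x₁ x₂ : Fin 2 → ℂ) (hx₁ : star x₁ ⬝ᵥ x₁ = 1) (hx₂ : star x₂ ⬝ᵥ x₂ = 1)
    (B₁ B₂ : Matrix (Fin 2) (Fin 2) ℂ)
    (hB₁ : B₁.PosSemidef) (hB₁t : B₁.trace = 1)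
    (hB₂ : B₂.PosSemidef) (hB₂t : B₂.trace = 1) :
    (∀ t : ℝ, 0 ≤ t →
        traceNorm (B₁ - (t : ℂ) • B₂) ≤
          traceNorm (vecMulVec x₁ (star x₁) - (t : ℂ) • vecMulVec x₂ (star x₂))) ↔
    ‖star x₁ ⬝ᵥ x₂‖ ≤ traceNorm (hB₁.sqrt * hB₂.sqrt) := by
  set u : ℂ := star x₁ ⬝ᵥ x₂ with hu
  set c : ℝ := Complex.normSq u with hc
  have hx₁' : star (x₁ 0) * x₁ 0 + star (x₁ 1) * x₁ 1 = 1 := by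
    simpa [dotProduct, Fin.sum_univ_two, Pi.star_apply] using hx₁
  have hx₂' : star (x₂ 0) * x₂ 0 + star (x₂ 1) * x₂ 1 = 1 := by
    simpa [dotProduct, Fin.sum_univ_two, Pi.star_apply] using hx₂
  have hu' : u = star (x₁ 0) * x₂ 0 + star (x₁ 1) * x₂ 1 := by
    simp [hu, dotProduct, Fin.sum_univ_two, Pi.star_apply]
  have hmc : u * star u = (c : ℂ) := by
    rw [hc, Complex.star_def, Complex.mul_conj]
  -- Cauchy-Schwarz: c ≤ 1
  have hc1 : c ≤ 1 := by
    have hl := lagrange (x₁ 0) (x₁ 1) (x₂ 0) (x₂ 1) hx₁' hx₂'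
    rw [← hu', hmc] at hl
    set v : ℂ := x₁ 0 * x₂ 1 - x₁ 1 * x₂ 0 with hv
    have hv' : v * star v = (Complex.normSq v : ℂ) := by
      rw [Complex.star_def, Complex.mul_conj]
    rw [hv'] at hl
    have : 1 - c = Complex.normSq v := by exact_mod_cast hl
    have := Complex.normSq_nonneg v
    linarith
  -- pure state facts
  set P₁ := vecMulVec x₁ (star x₁) with hP₁
  set P₂ := vecMulVec x₂ (star x₂) with hP₂
  have htrP₁ : P₁.trace = 1 := by
    simp only [hP₁, Matrix.trace_fin_two, Matrix.vecMulVec_apply, Pi.star_apply]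
    linear_combination hx₁'
  have htrP₂ : P₂.trace = 1 := by
    simp only [hP₂, Matrix.trace_fin_two, Matrix.vecMulVec_apply, Pi.star_apply]
    linear_combination hx₂'
  have hdetP₁ : P₁.det = 0 := by
    simp only [hP₁, Matrix.det_fin_two, Matrix.vecMulVec_apply, Pi.star_apply]; ring
  have hdetP₂ : P₂.det = 0 := by
    simp only [hP₂, Matrix.det_fin_two, Matrix.vecMulVec_apply, Pi.star_apply]; ring
  have htrP₁₂ : (P₁ * P₂).trace = (c : ℂ) := by
    rw [← hmc]
    simp only [hP₁, hP₂, Matrix.trace_fin_two, Matrix.mul_apply, Fin.sum_univ_two,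
      Matrix.vecMulVec_apply, Pi.star_apply, hu']
    simp only [star_add, StarMul.star_mul, star_star]
    ring
  -- density matrix facts
  obtain ⟨hd₁, hd₁0⟩ := complex_nonneg_re (psd_det_nonneg hB₁)
  obtain ⟨hd₂, hd₂0⟩ := complex_nonneg_re (psd_det_nonneg hB₂)
  set d₁ : ℝ := B₁.det.re with hd₁def
  set d₂ : ℝ := B₂.det.re with hd₂def
  set S₁ := hB₁.sqrt with hS₁def
  set S₂ := hB₂.sqrt with hS₂def
  have hXX : (S₁ * S₂)ᴴ * (S₁ * S₂) = S₂ * B₁ * S₂ := by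
    rw [Matrix.conjTranspose_mul, hB₁.posSemidef_sqrt.1, hB₂.posSemidef_sqrt.1]
    conv_rhs => rw [← hB₁.sqrt_mul_self]
    noncomm_ring
  have htrX : ((S₁ * S₂)ᴴ * (S₁ * S₂)).trace = (B₁ * B₂).trace := by
    rw [hXX, Matrix.trace_mul_cycle, hB₂.sqrt_mul_self, Matrix.trace_mul_comm]
  have hm0 : 0 ≤ (B₁ * B₂).trace := by
    rw [← htrX]; exact psd_trace_nonneg (Matrix.posSemidef_conjTranspose_mul_self _)
  obtain ⟨hm, hm0'⟩ := complex_nonneg_re hm0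
  set m : ℝ := ((B₁ * B₂).trace).re with hmdef
  -- determinant of sqrt
  have hdS₁ : S₁.det = (Real.sqrt d₁ : ℂ) := by
    apply complex_nonneg_eq (psd_det_nonneg hB₁.posSemidef_sqrt) (Real.sqrt_nonneg _)
    rw [← Matrix.det_mul, hB₁.sqrt_mul_self, hd₁]
    norm_cast
    exact (Real.mul_self_sqrt hd₁0).symm
  have hdS₂ : S₂.det = (Real.sqrt d₂ : ℂ) := by
    apply complex_nonneg_eq (psd_det_nonneg hB₂.posSemidef_sqrt) (Real.sqrt_nonneg _)
    rw [← Matrix.det_mul, hB₂.sqrt_mul_self, hd₂]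
    norm_cast
    exact (Real.mul_self_sqrt hd₂0).symm
  -- trace norm of the geometric mean term
  have hTN : traceNorm (S₁ * S₂) = Real.sqrt (m + 2 * Real.sqrt (d₁ * d₂)) := by
    rw [traceNorm_eq_sqrt]
    congr 2
    · rw [htrX, hm, Complex.ofReal_re]
    · rw [Matrix.det_mul, hdS₁, hdS₂, ← Complex.ofReal_mul, Complex.norm_real, Real.norm_eq_abs,
        abs_of_nonneg (by positivity), ← Real.sqrt_mul hd₁0]
  -- right hand side equivalence
  have hR : (‖u‖ ≤ traceNorm (S₁ * S₂)) ↔ -2 * Real.sqrt (d₁ * d₂) ≤ m - c := by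
    rw [hTN, Real.le_sqrt (norm_nonneg u)
      (add_nonneg hm0' (by positivity)), Complex.sq_norm, ← hc]
    constructor <;> intro h <;> linarith
  -- per-t computations
  have hL : ∀ t : ℝ, 0 ≤ t →
      (traceNorm (B₁ - (t : ℂ) • B₂) ≤ traceNorm (P₁ - (t : ℂ) • P₂) ↔
        0 ≤ d₂ * t ^ 2 + (m - c) * t + d₁) := by
    intro t ht
    have htrB : (B₁ - (t : ℂ) • B₂).trace = ((1 - t : ℝ) : ℂ) := by
      rw [Matrix.trace_sub, Matrix.trace_smul, hB₁t, hB₂t]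
      push_cast
      simp [smul_eq_mul]
    have hdetB : (B₁ - (t : ℂ) • B₂).det = ((d₂ * t ^ 2 + (m - 1) * t + d₁ : ℝ) : ℂ) := by
      rw [det_sub_smul, hd₁, hd₂, hB₁t, hB₂t, hm]
      push_cast
      ring
    have htrPt : (P₁ - (t : ℂ) • P₂).trace = ((1 - t : ℝ) : ℂ) := by
      rw [Matrix.trace_sub, Matrix.trace_smul, htrP₁, htrP₂]
      push_cast
      simp [smul_eq_mul]
    have hdetPt : (P₁ - (t : ℂ) • P₂).det = ((-(t * (1 - c)) : ℝ) : ℂ) := by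
      rw [det_sub_smul, hdetP₁, hdetP₂, htrP₁, htrP₂, htrP₁₂]
      push_cast
      ring
    rw [traceNorm_herm (herm_sub_smul hB₁.1 hB₂.1 t) htrB hdetB,
      traceNorm_herm (herm_sub_smul (herm_vecMulVec x₁) (herm_vecMulVec x₂) t) htrPt hdetPt]
    have he : 0 ≤ t * (1 - c) := mul_nonneg ht (by linarith)
    have habs : |(-(t * (1 - c)))| = t * (1 - c) := by
      rw [abs_neg, abs_of_nonneg he]
    rw [habs]
    rw [Real.sqrt_le_sqrt_iff (by nlinarith)]
    rcases abs_cases (d₂ * t ^ 2 + (m - 1) * t + d₁) with ⟨h1, h2⟩ | ⟨h1, h2⟩ <;>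
      constructor <;> intro h3 <;> nlinarith
  constructor
  · intro H
    exact hR.mpr ((quad_iff hd₁0 hd₂0).mp fun t ht => (hL t ht).mp (H t ht))
  · intro H t ht
    exact (hL t ht).mpr ((quad_iff hd₁0 hd₂0).mpr (hR.mp H) t ht)
end

section
/- Let A₁,…,A_k ∈ M_n(ℂ) and B₁,…,B_k ∈ M_m(ℂ) be density matrices. There exists a trace-preserving completely positive map T : M_n(ℂ) → M_m(ℂ) with T(A_i) = B_i for i = 1,…,k if and only if there exist positive integers r and s with ms ≥ n, vectors x_{ji} ∈ ℂⁿ (for j = 1,…,r, i = 1,…,k) with A_i = ∑_{j=1}^r x_{ji}x_{ji}ᴴ, vectors y_{ji}^t ∈ ℂᵐ (for j = 1,…,r, i = 1,…,k, t = 1,…,s) with B_i = ∑_{j=1}^r ∑_{t=1}^s y_{ji}^t (y_{ji}^t)ᴴ, and a unitary matrix U ∈ M_{ms}(ℂ) such that for all j, i, U applied to the vector obtained from x_{ji} by appending ms − n zero entries equals the vector in ℂ^{ms} obtained by stacking y_{ji}^1,…,y_{ji}^s. -/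
open Matrix
open scoped ComplexOrder

/-- The vector in `ℂ^N` obtained from `v ∈ ℂⁿ` by appending `N - n` zero entries. -/
def padVec {n : ℕ} (N : ℕ) (v : Fin n → ℂ) : Fin N → ℂ := fun a =>
  if h : (a : ℕ) < n then v ⟨a, h⟩ else 0

/-- The vector in `ℂ^{m·s}` obtained by stacking the vectors `y 0, …, y (s-1) ∈ ℂᵐ`. -/
def stackVec {m s : ℕ} (y : Fin s → Fin m → ℂ) : Fin (m * s) → ℂ := fun a =>
  if hm : 0 < m then
    y ⟨(a : ℕ) / m, by
        rw [Nat.div_lt_iff_lt_mul hm]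
        exact lt_of_lt_of_eq a.isLt (Nat.mul_comm m s)⟩
      ⟨(a : ℕ) % m, Nat.mod_lt _ hm⟩
  else 0

lemma sum_extendD {M : Type*} [AddCommMonoid M] {t s : ℕ} (h : t ≤ s)
    (G : ∀ j : ℕ, j < t → M) :
    ∑ j : Fin s, (if hj : (j : ℕ) < t then G j hj else 0) = ∑ j : Fin t, G j j.isLt := by
  have h1 : ∑ j : Fin s, (if hj : (j : ℕ) < t then G j hj else 0)
      = ∑ j ∈ Finset.range s, (if hj : j < t then G j hj else 0) :=
    Fin.sum_univ_eq_sum_range (fun j => if hj : j < t then G j hj else 0) s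
  have h2 : ∑ j ∈ Finset.range t, (if hj : j < t then G j hj else 0)
      = ∑ j : Fin t, G j j.isLt := by
    rw [← Fin.sum_univ_eq_sum_range (fun j => if hj : j < t then G j hj else 0) t]
    exact Finset.sum_congr rfl fun j _ => dif_pos j.isLt
  rw [h1, ← h2]
  exact (Finset.sum_subset (Finset.range_subset_range.2 h)
    (fun x _ hx => dif_neg (by simpa using hx))).symm

lemma conj_vecMulVec {m n : ℕ} (F : Matrix (Fin m) (Fin n) ℂ) (u : Fin n → ℂ) :
    F * vecMulVec u (star u) * Fᴴ = vecMulVec (F *ᵥ u) (star (F *ᵥ u)) := by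
  ext p q
  simp only [mul_apply, vecMulVec_apply, conjTranspose_apply, mulVec, dotProduct,
    Pi.star_apply, Finset.sum_mul, Finset.mul_sum, star_sum, star_mul', RCLike.star_def]
  exact Finset.sum_congr rfl fun b _ => Finset.sum_congr rfl fun a _ => by ring

def embTP {m s : ℕ} (t : Fin s) (p : Fin m) : Fin (m * s) :=
  ⟨m * t + p, by
    calc m * (t : ℕ) + (p : ℕ) < m * t + m := by omega
    _ = m * (t + 1) := by ring
    _ ≤ m * s := Nat.mul_le_mul_left m t.isLt⟩

lemma embTP_bij {m s : ℕ} :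
    Function.Bijective (fun tp : Fin s × Fin m => embTP tp.1 tp.2) := by
  constructor
  · rintro ⟨t, p⟩ ⟨t', p'⟩ h
    have hm : 0 < m := p.pos
    have hv : m * (t : ℕ) + p = m * t' + p' := congrArg Fin.val h
    have ht : (t : ℕ) = t' := by
      have := congrArg (· / m) hv
      simpa [Nat.mul_add_div hm, Nat.div_eq_of_lt p.isLt, Nat.div_eq_of_lt p'.isLt] using this
    rw [ht] at hv
    have hp : (p : ℕ) = p' := by omega
    simp [Prod.ext_iff, Fin.ext_iff, ht, hp]
  · intro a
    have hms : 0 < m * s := a.pos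
    have hm : 0 < m := by
      rcases Nat.eq_zero_or_pos m with h | h
      · subst h; simp at hms
      · exact h
    refine ⟨⟨⟨(a : ℕ) / m, ?_⟩, ⟨(a : ℕ) % m, Nat.mod_lt _ hm⟩⟩, ?_⟩
    · rw [Nat.div_lt_iff_lt_mul hm]; exact lt_of_lt_of_eq a.isLt (Nat.mul_comm m s)
    · apply Fin.ext
      simp [embTP, Nat.div_add_mod]

lemma sum_embTP {M : Type*} [AddCommMonoid M] {m s : ℕ} (f : Fin (m * s) → M) :
    ∑ a, f a = ∑ t : Fin s, ∑ p : Fin m, f (embTP t p) := by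
  refine ((Fintype.sum_bijective _ embTP_bij (fun tp => f (embTP tp.1 tp.2)) f
    (fun _ => rfl)).symm).trans ?_
  exact Fintype.sum_prod_type _

lemma stack_embTP {m s : ℕ} (y : Fin s → Fin m → ℂ) (t : Fin s) (p : Fin m) :
    stackVec y (embTP t p) = y t p := by
  have hm : 0 < m := p.pos
  simp only [stackVec, dif_pos hm, embTP]
  congr 1 <;> apply Fin.ext <;>
    simp [Nat.mul_add_div hm, Nat.mul_add_mod, Nat.div_eq_of_lt p.isLt,
      Nat.mod_eq_of_lt p.isLt]

lemma mulVec_padVec {n N : ℕ} (hns : n ≤ N) (U : Matrix (Fin N) (Fin N) ℂ)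
    (u : Fin n → ℂ) (b : Fin N) :
    (U *ᵥ padVec N u) b = ∑ q : Fin n, U b ⟨q, lt_of_lt_of_le q.isLt hns⟩ * u q := by
  have e1 : (U *ᵥ padVec N u) b = ∑ a : Fin N,
      (if h : (a : ℕ) < n then U b ⟨a, lt_of_lt_of_le h hns⟩ * u ⟨a, h⟩ else 0) := by
    simp only [mulVec, dotProduct, padVec]
    refine Finset.sum_congr rfl fun a _ => ?_
    split_ifs with h
    · rfl
    · exact mul_zero _
  rw [e1]
  exact sum_extendD hns (fun j hj => U b ⟨j, lt_of_lt_of_le hj hns⟩ * u ⟨j, hj⟩)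

/-- Characterization of TPCP interpolation between families of density matrices via
decompositions into vectors and a unitary dilation. -/
theorem stmt_9 {n m k : ℕ}
    (A : Fin k → Matrix (Fin n) (Fin n) ℂ) (B : Fin k → Matrix (Fin m) (Fin m) ℂ)
    (hA : ∀ i, (A i).PosSemidef ∧ (A i).trace = 1)
    (hB : ∀ i, (B i).PosSemidef ∧ (B i).trace = 1) :
    (∃ (t : ℕ) (F : Fin t → Matrix (Fin m) (Fin n) ℂ),
        (∑ j, (F j)ᴴ * F j = 1) ∧ ∀ i, (∑ j, F j * A i * (F j)ᴴ) = B i) ↔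
    (∃ (r s : ℕ), 0 < r ∧ 0 < s ∧ n ≤ m * s ∧
      ∃ (x : Fin r → Fin k → Fin n → ℂ) (y : Fin r → Fin k → Fin s → Fin m → ℂ)
        (U : Matrix (Fin (m * s)) (Fin (m * s)) ℂ),
        Uᴴ * U = 1 ∧ U * Uᴴ = 1 ∧
        (∀ i, A i = ∑ j, vecMulVec (x j i) (star (x j i))) ∧
        (∀ i, B i = ∑ j, ∑ t, vecMulVec (y j i t) (star (y j i t))) ∧
        ∀ j i, U *ᵥ padVec (m * s) (x j i) = stackVec (y j i)) := by
  constructor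
  · rintro ⟨t₀, F, hF1, hFB⟩
    rcases Nat.eq_zero_or_pos m with hm | hm
    · -- degenerate case m = 0
      subst hm
      have hn : n = 0 := by
        by_contra hn0
        have hq : 0 < n := Nat.pos_of_ne_zero hn0
        have h1 := congrFun (congrFun hF1 ⟨0, hq⟩) ⟨0, hq⟩
        simp [Matrix.sum_apply, mul_apply, one_apply] at h1
      subst hn
      refine ⟨1, 1, one_pos, one_pos, Nat.le_refl _, fun _ _ => Fin.elim0,
        fun _ _ _ => Fin.elim0, 1, by simp, by simp, ?_, ?_, ?_⟩
      · intro i; ext a b; exact a.elim0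
      · intro i; ext a b; exact a.elim0
      · intro j i
        funext a
        exact absurd a.isLt (by omega)
    · -- main case m > 0
      set s := t₀ + n + 1 with hsdef
      have hts : t₀ ≤ s := by omega
      have hns : n ≤ m * s := le_trans (by omega) (Nat.le_mul_of_pos_left s hm)
      set Fe : Fin s → Matrix (Fin m) (Fin n) ℂ :=
        fun j => if hj : (j : ℕ) < t₀ then F ⟨j, hj⟩ else 0 with hFedef
      have hFe1 : ∑ j : Fin s, (Fe j)ᴴ * Fe j = 1 := by
        have e : ∀ j : Fin s, (Fe j)ᴴ * Fe j
            = if hj : (j : ℕ) < t₀ then (F ⟨j, hj⟩)ᴴ * F ⟨j, hj⟩ else 0 := by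
          intro j
          simp only [hFedef]
          split_ifs with h
          · rfl
          · simp
        rw [Finset.sum_congr rfl fun j _ => e j,
          sum_extendD hts (fun j hj => (F ⟨j, hj⟩)ᴴ * F ⟨j, hj⟩)]
        exact hF1
      have hFeB : ∀ i, ∑ j : Fin s, Fe j * A i * (Fe j)ᴴ = B i := by
        intro i
        have e : ∀ j : Fin s, Fe j * A i * (Fe j)ᴴ
            = if hj : (j : ℕ) < t₀ then F ⟨j, hj⟩ * A i * (F ⟨j, hj⟩)ᴴ else 0 := by
          intro j
          simp only [hFedef]
          split_ifs with h
          · rfl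
          · simp
        rw [Finset.sum_congr rfl fun j _ => e j,
          sum_extendD hts (fun j hj => F ⟨j, hj⟩ * A i * (F ⟨j, hj⟩)ᴴ)]
        exact hFB i
      choose C hC using fun i => (show ∃ B : Matrix (Fin n) (Fin n) ℂ, A i = Bᴴ * B by
        open scoped MatrixOrder Matrix.Norms.L2Operator in
        obtain ⟨B, hB⟩ := CStarAlgebra.nonneg_iff_eq_star_mul_self.mp (hA i).1.nonneg
        exact ⟨B, hB⟩)
      set r := n + 1 with hrdef
      set x : Fin r → Fin k → Fin n → ℂ :=
        fun j i => if hj : (j : ℕ) < n then (fun p => star (C i ⟨j, hj⟩ p)) else 0 with hxdef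
      have hAx : ∀ i, A i = ∑ j : Fin r, vecMulVec (x j i) (star (x j i)) := by
        intro i
        have e : ∀ j : Fin r, vecMulVec (x j i) (star (x j i))
            = if hj : (j : ℕ) < n then
                vecMulVec (fun p => star (C i ⟨j, hj⟩ p))
                  (star (fun p => star (C i ⟨j, hj⟩ p))) else 0 := by
          intro j
          simp only [hxdef]
          split_ifs with h
          · rfl
          · ext p q; simp [vecMulVec_apply]
        rw [Finset.sum_congr rfl fun j _ => e j,
          sum_extendD (by omega : n ≤ r)
            (fun j hj => vecMulVec (fun p => star (C i ⟨j, hj⟩ p))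
              (star (fun p => star (C i ⟨j, hj⟩ p)))), hC i]
        ext p q
        simp only [Matrix.sum_apply, vecMulVec_apply, mul_apply, conjTranspose_apply,
          Pi.star_apply, star_star]
      set y : Fin r → Fin k → Fin s → Fin m → ℂ := fun j i t => Fe t *ᵥ x j i with hydef
      have hBy : ∀ i, B i = ∑ j : Fin r, ∑ t : Fin s, vecMulVec (y j i t) (star (y j i t)) := by
        intro i
        rw [← hFeB i]
        calc ∑ t : Fin s, Fe t * A i * (Fe t)ᴴ
            = ∑ t : Fin s, ∑ j : Fin r, vecMulVec (y j i t) (star (y j i t)) := by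
              refine Finset.sum_congr rfl fun t _ => ?_
              rw [hAx i, Matrix.mul_sum, Matrix.sum_mul]
              exact Finset.sum_congr rfl fun j _ => by rw [conj_vecMulVec]
          _ = ∑ j : Fin r, ∑ t : Fin s, vecMulVec (y j i t) (star (y j i t)) :=
              Finset.sum_comm
      set V : Matrix (Fin (m * s)) (Fin n) ℂ :=
        Matrix.of (fun a q => stackVec (fun t p => Fe t p q) a) with hVdef
      have hVemb : ∀ (t : Fin s) (p : Fin m) (q : Fin n), V (embTP t p) q = Fe t p q :=
        fun t p q => stack_embTP (fun t p => Fe t p q) t p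
      have hVmul : ∀ (u : Fin n → ℂ) (a : Fin (m * s)),
          (∑ q, V a q * u q) = stackVec (fun t => Fe t *ᵥ u) a := by
        intro u a
        simp only [hVdef, Matrix.of_apply, stackVec, dif_pos hm, mulVec, dotProduct]
      have hVorth : ∀ q q' : Fin n,
          (∑ a, star (V a q) * V a q') = if q = q' then (1 : ℂ) else 0 := by
        intro q q'
        rw [sum_embTP (fun a => star (V a q) * V a q')]
        calc ∑ t : Fin s, ∑ p : Fin m, star (V (embTP t p) q) * V (embTP t p) q'
            = ∑ t : Fin s, ((Fe t)ᴴ * Fe t) q q' := by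
              refine Finset.sum_congr rfl fun t _ => ?_
              simp [mul_apply, conjTranspose_apply, hVemb]
          _ = (∑ t : Fin s, (Fe t)ᴴ * Fe t) q q' := (Matrix.sum_apply _ _ _ _).symm
          _ = (1 : Matrix (Fin n) (Fin n) ℂ) q q' := by rw [hFe1]
          _ = if q = q' then (1 : ℂ) else 0 := one_apply
      set v : Fin (m * s) → EuclideanSpace ℂ (Fin (m * s)) :=
        fun a => if h : (a : ℕ) < n then WithLp.toLp 2 (fun b => V b ⟨a, h⟩) else 0 with hvdef
      have hvon : Orthonormal ℂ (({a : Fin (m * s) | (a : ℕ) < n}).restrict v) := by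
        rw [orthonormal_iff_ite]
        rintro ⟨a, ha⟩ ⟨a', ha'⟩
        have ha2 : (a : ℕ) < n := ha
        have ha2' : (a' : ℕ) < n := ha'
        have hva : ∀ (c : Fin (m * s)) (hc : (c : ℕ) < n),
            v c = WithLp.toLp 2 (fun b => V b ⟨c, hc⟩) := fun c hc => by
          rw [hvdef]; exact dif_pos hc
        rw [PiLp.inner_apply]
        change ∑ x, (v a').ofLp x * (starRingEnd ℂ) ((v a).ofLp x) = _
        simp only [Set.restrict_apply, hva a ha2, hva a' ha2', RCLike.inner_apply, PiLp.toLp_apply]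
        have := hVorth ⟨a, ha2⟩ ⟨a', ha2'⟩
        simp only [RCLike.star_def] at this ⊢
        rw [show (∑ x, V x ⟨a', ha2'⟩ * (starRingEnd ℂ) (V x ⟨a, ha2⟩))
          = ∑ x, (starRingEnd ℂ) (V x ⟨a, ha2⟩) * V x ⟨a', ha2'⟩ from
          Finset.sum_congr rfl fun x _ => mul_comm _ _, this]
        rcases eq_or_ne a a' with rfl | hne
        · simp
        · have h1 : (⟨(a : ℕ), ha2⟩ : Fin n) ≠ ⟨(a' : ℕ), ha2'⟩ :=
            fun hc => hne (Fin.ext (Fin.mk.inj hc))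
          have h2 : (⟨a, ha⟩ : {a : Fin (m * s) // (a : ℕ) < n}) ≠ ⟨a', ha'⟩ :=
            fun hc => hne (Subtype.mk.inj hc)
          rw [if_neg h1, if_neg h2]
      have hcard : Module.finrank ℂ (EuclideanSpace ℂ (Fin (m * s)))
          = Fintype.card (Fin (m * s)) := by simp
      obtain ⟨b, hb⟩ := hvon.exists_orthonormalBasis_extension_of_card_eq hcard
      set U : Matrix (Fin (m * s)) (Fin (m * s)) ℂ :=
        Matrix.of (fun a' a => b a a') with hUdef
      have hU1 : Uᴴ * U = 1 := by
        ext a c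
        have h := (orthonormal_iff_ite.mp b.orthonormal) a c
        rw [PiLp.inner_apply] at h
        simp only [RCLike.inner_apply] at h
        have h2 : ((Uᴴ * U) a c) = ∑ p, star (b a p) * b c p := by
          simp [mul_apply, conjTranspose_apply, hUdef]
        rw [h2]
        rcases eq_or_ne a c with rfl | hne
        · simpa [mul_comm] using h
        · rw [one_apply_ne hne]
          simpa [hne, mul_comm] using h
      have hU2 : U * Uᴴ = 1 := mul_eq_one_comm.mp hU1
      have hbeN : ∀ (q : Fin n) (a : Fin (m * s)),
          b ⟨(q : ℕ), lt_of_lt_of_le q.isLt hns⟩ a = V a q := by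
        intro q a
        have hmem : (⟨(q : ℕ), lt_of_lt_of_le q.isLt hns⟩ : Fin (m * s))
            ∈ {a : Fin (m * s) | (a : ℕ) < n} := q.isLt
        have h := hb _ hmem
        rw [h]
        simp only [hvdef, dif_pos (show ((⟨(q : ℕ), lt_of_lt_of_le q.isLt hns⟩ :
          Fin (m * s)) : ℕ) < n from q.isLt)]
      have hUpad : ∀ (j : Fin r) (i : Fin k),
          U *ᵥ padVec (m * s) (x j i) = stackVec (y j i) := by
        intro j i
        funext a
        rw [mulVec_padVec hns]
        have e : ∀ q : Fin n,
            U a ⟨(q : ℕ), lt_of_lt_of_le q.isLt hns⟩ * x j i q = V a q * x j i q := by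
          intro q
          rw [hUdef]
          exact congrArg (· * x j i q) (hbeN q a)
        rw [Finset.sum_congr rfl fun q _ => e q, hVmul]
      exact ⟨r, s, by omega, by omega, hns, x, y, U, hU1, hU2, hAx, hBy, hUpad⟩
  · rintro ⟨r, s, hr, hs, hns, x, y, U, hU1, hU2, hAx, hBy, hUxy⟩
    set eN : Fin n → Fin (m * s) := fun q => ⟨q, lt_of_lt_of_le q.isLt hns⟩ with heN
    set F : Fin s → Matrix (Fin m) (Fin n) ℂ :=
      fun t => Matrix.of (fun p q => U (embTP t p) (eN q)) with hF
    have hFx : ∀ (t : Fin s) (j : Fin r) (i : Fin k), F t *ᵥ x j i = y j i t := by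
      intro t j i
      funext p
      have h1 : (F t *ᵥ x j i) p = (U *ᵥ padVec (m * s) (x j i)) (embTP t p) := by
        rw [mulVec_padVec hns]
        rfl
      rw [h1, hUxy j i, stack_embTP]
    refine ⟨s, F, ?_, ?_⟩
    · ext q q'
      have hcalc : (∑ t, (F t)ᴴ * F t) q q'
          = ∑ t : Fin s, ∑ p : Fin m,
              star (U (embTP t p) (eN q)) * U (embTP t p) (eN q') := by
        rw [Matrix.sum_apply]
        exact Finset.sum_congr rfl fun t _ => by
          simp [mul_apply, conjTranspose_apply, hF]
      rw [hcalc, ← sum_embTP (fun a => star (U a (eN q)) * U a (eN q'))]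
      have h2 : (∑ a, star (U a (eN q)) * U a (eN q')) = (Uᴴ * U) (eN q) (eN q') := by
        simp [mul_apply, conjTranspose_apply]
      rw [h2, hU1]
      rcases eq_or_ne q q' with rfl | h
      · simp
      · rw [one_apply_ne, one_apply_ne h]
        intro hc
        have h2 : ((eN q : Fin (m * s)) : ℕ) = (eN q' : Fin (m * s)) :=
          congrArg Fin.val hc
        exact h (Fin.ext h2)
    · intro i
      rw [hAx i]
      calc ∑ t : Fin s, F t * (∑ j, vecMulVec (x j i) (star (x j i))) * (F t)ᴴ
          = ∑ t : Fin s, ∑ j : Fin r, vecMulVec (y j i t) (star (y j i t)) := by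
            refine Finset.sum_congr rfl fun t _ => ?_
            rw [Matrix.mul_sum, Matrix.sum_mul]
            refine Finset.sum_congr rfl fun j _ => ?_
            rw [conj_vecMulVec, hFx]
        _ = ∑ j : Fin r, ∑ t : Fin s, vecMulVec (y j i t) (star (y j i t)) :=
            Finset.sum_comm
        _ = B i := (hBy i).symm
end

section
/- Let x₁,…,x_k ∈ ℂⁿ and y₁,…,y_k ∈ ℂᵐ be unit vectors. There exists a trace-preserving completely positive map T : M_n(ℂ) → M_m(ℂ) with T(x_ix_iᴴ) = y_iy_iᴴ for i = 1,…,k if and only if there exist a positive integer s with ms ≥ n, unit vectors v₁,…,v_k ∈ ℂˢ, and a unitary matrix U ∈ M_{ms}(ℂ) such that, for each i = 1,…,k, U applied to the vector obtained from x_i by appending ms − n zero entries equals the Kronecker product v_i ⊗ y_i. -/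
open Matrix
open scoped ComplexOrder

/-- The Kronecker product `v ⊗ y ∈ ℂ^{m·s}` of `v ∈ ℂˢ` and `y ∈ ℂᵐ`: the block of
entries indexed by `j` consists of `v j • y`. -/
def kronVec {m s : ℕ} (v : Fin s → ℂ) (y : Fin m → ℂ) : Fin (m * s) → ℂ :=
  stackVec (fun t p => v t * y p)

def stIdx (m s : ℕ) : Fin s × Fin m ≃ Fin (m * s) :=
  finProdFinEquiv.trans (finCongr (Nat.mul_comm s m))

lemma stIdx_val {m s : ℕ} (t : Fin s) (p : Fin m) :
    ((stIdx m s (t, p) : Fin (m * s)) : ℕ) = (p : ℕ) + m * (t : ℕ) := rfl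

lemma stackVec_stIdx {m s : ℕ} (y : Fin s → Fin m → ℂ) (t : Fin s) (p : Fin m) :
    stackVec y (stIdx m s (t, p)) = y t p := by
  have hm : 0 < m := p.pos
  have h1 : ((stIdx m s (t, p) : Fin (m * s)) : ℕ) / m = (t : ℕ) := by
    rw [stIdx_val, Nat.add_mul_div_left _ _ hm, Nat.div_eq_of_lt p.isLt, Nat.zero_add]
  have h2 : ((stIdx m s (t, p) : Fin (m * s)) : ℕ) % m = (p : ℕ) := by
    rw [stIdx_val, Nat.add_mul_mod_self_left, Nat.mod_eq_of_lt p.isLt]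
  simp only [stackVec, dif_pos hm]
  exact congrArg₂ (fun (i : Fin s) (j : Fin m) => y i j) (Fin.ext h1) (Fin.ext h2)

lemma sum_fin_mul {m s : ℕ} (f : Fin (m * s) → ℂ) :
    ∑ a, f a = ∑ t : Fin s, ∑ p : Fin m, f (stIdx m s (t, p)) := by
  rw [← Equiv.sum_comp (stIdx m s) f, Fintype.sum_prod_type]

lemma star_stackVec_dot {m s : ℕ} (y z : Fin s → Fin m → ℂ) :
    star (stackVec y) ⬝ᵥ stackVec z = ∑ t, star (y t) ⬝ᵥ z t := by
  simp only [dotProduct, Pi.star_apply]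
  rw [sum_fin_mul]
  simp [stackVec_stIdx]

lemma mul_vecMulVec {m n : ℕ} (F : Matrix (Fin m) (Fin n) ℂ) (x : Fin n → ℂ) :
    F * vecMulVec x (star x) * Fᴴ = vecMulVec (F *ᵥ x) (star (F *ᵥ x)) := by
  ext p q
  simp only [mul_apply, vecMulVec_apply, conjTranspose_apply, mulVec, dotProduct,
    Pi.star_apply, star_sum, star_mul', Finset.sum_mul, Finset.mul_sum]
  refine Finset.sum_congr rfl fun a _ => Finset.sum_congr rfl fun b _ => by ring

lemma vecMulVec_smul_star {m : ℕ} (c : ℂ) (y : Fin m → ℂ) :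
    vecMulVec (c • y) (star (c • y)) = (c * star c) • vecMulVec y (star y) := by
  ext p q
  simp only [vecMulVec_apply, Pi.star_apply, Pi.smul_apply, Matrix.smul_apply, smul_eq_mul, star_mul']
  ring

lemma vecMulVec_mulVec {m : ℕ} (w : Fin m → ℂ) (y : Fin m → ℂ) :
    vecMulVec w (star w) *ᵥ y = (star w ⬝ᵥ y) • w := by
  ext p
  simp only [mulVec, vecMulVec_apply, dotProduct, Pi.star_apply, Pi.smul_apply,
    smul_eq_mul, Finset.sum_mul, Finset.mul_sum]
  refine Finset.sum_congr rfl fun a _ => by ring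

lemma star_dot_self {m : ℕ} (u : Fin m → ℂ) :
    star u ⬝ᵥ u = ((∑ p, Complex.normSq (u p) : ℝ) : ℂ) := by
  push_cast
  simp [dotProduct, Complex.normSq_eq_conj_mul_self, Complex.star_def]

lemma star_dot_comm {m : ℕ} (u v : Fin m → ℂ) :
    star (star u ⬝ᵥ v) = star v ⬝ᵥ u := by
  simp [dotProduct, star_sum, mul_comm]

lemma sum_mulVec' {m n s : ℕ} (M : Fin s → Matrix (Fin m) (Fin n) ℂ) (y : Fin n → ℂ) :
    (∑ t, M t) *ᵥ y = ∑ t, (M t *ᵥ y) := by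
  ext p
  simp only [mulVec, dotProduct, Matrix.sum_apply, Finset.sum_apply, Finset.sum_mul]
  rw [Finset.sum_comm]

lemma dot_sum' {m s : ℕ} (v : Fin m → ℂ) (w : Fin s → Fin m → ℂ) :
    v ⬝ᵥ (∑ t, w t) = ∑ t, v ⬝ᵥ w t := by
  simp only [dotProduct, Finset.sum_apply, Finset.mul_sum]
  rw [Finset.sum_comm]

lemma rank_one_decomp {m s : ℕ} (w : Fin s → Fin m → ℂ) (y : Fin m → ℂ)
    (hy : star y ⬝ᵥ y = 1)
    (hsum : ∑ t, vecMulVec (w t) (star (w t)) = vecMulVec y (star y)) :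
    (∀ t, w t = (star y ⬝ᵥ w t) • y) ∧
      (∑ t, (star y ⬝ᵥ w t) * star (star y ⬝ᵥ w t)) = 1 := by
  classical
  set c : Fin s → ℂ := fun t => star y ⬝ᵥ w t with hc
  have hA : ∑ t, star (w t) ⬝ᵥ w t = 1 := by
    have h := congrArg (fun M : Matrix (Fin m) (Fin m) ℂ => ∑ p, M p p) hsum
    simp only [Matrix.sum_apply, vecMulVec_apply] at h
    rw [Finset.sum_comm] at h
    calc ∑ t, star (w t) ⬝ᵥ w t = ∑ t, ∑ p, w t p * star (w t p) := by
          simp [dotProduct, mul_comm]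
      _ = ∑ p, y p * star (y p) := h
      _ = 1 := by rw [← hy]; simp [dotProduct, mul_comm]
  have hB : ∑ t, c t * star (c t) = 1 := by
    have h := congrArg (fun M : Matrix (Fin m) (Fin m) ℂ => star y ⬝ᵥ (M *ᵥ y)) hsum
    simp only [sum_mulVec', dot_sum', vecMulVec_mulVec, dotProduct_smul,
      smul_eq_mul] at h
    calc ∑ t, c t * star (c t) = ∑ t, (star (w t) ⬝ᵥ y) * (star y ⬝ᵥ w t) := by
          refine Finset.sum_congr rfl fun t _ => ?_
          rw [← star_dot_comm]
          exact mul_comm _ _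
      _ = 1 := by rw [h, hy, one_mul]
  have hC : ∀ t, w t = c t • y := by
    have expand : ∀ t, star (w t - c t • y) ⬝ᵥ (w t - c t • y)
        = star (w t) ⬝ᵥ w t - c t * star (c t) := by
      intro t
      have h1 : star y ⬝ᵥ w t = c t := rfl
      have h2 : star (w t) ⬝ᵥ y = star (c t) := by rw [← star_dot_comm]
      simp only [star_sub, star_smul, sub_dotProduct, dotProduct_sub,
        smul_dotProduct, dotProduct_smul, smul_eq_mul, h1, h2, hy]
      ring
    have hz : ∑ t, star (w t - c t • y) ⬝ᵥ (w t - c t • y) = 0 := by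
      rw [Finset.sum_congr rfl fun t _ => expand t, Finset.sum_sub_distrib, hA, hB,
        sub_self]
    have hz' : ∑ t, ∑ p, Complex.normSq ((w t - c t • y) p) = 0 := by
      have hcast : ((∑ t, ∑ p, Complex.normSq ((w t - c t • y) p) : ℝ) : ℂ) = 0 := by
        push_cast
        rw [← hz]
        refine Finset.sum_congr rfl fun t _ => ?_
        rw [star_dot_self]
        push_cast
        rfl
      exact_mod_cast hcast
    intro t
    have ht : ∑ p, Complex.normSq ((w t - c t • y) p) = 0 :=
      (Finset.sum_eq_zero_iff_of_nonneg
        (fun t _ => Finset.sum_nonneg fun p _ => Complex.normSq_nonneg _)).mp hz' t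
        (Finset.mem_univ t)
    funext p
    have hp : (w t - c t • y) p = 0 :=
      Complex.normSq_eq_zero.mp
        ((Finset.sum_eq_zero_iff_of_nonneg
          (fun p _ => Complex.normSq_nonneg _)).mp ht p (Finset.mem_univ p))
    have := sub_eq_zero.mp hp
    simpa using this
  exact ⟨hC, hB⟩

lemma forward_dir {n m k r : ℕ} (x : Fin k → Fin n → ℂ) (y : Fin k → Fin m → ℂ)
    (hy : ∀ i, star (y i) ⬝ᵥ y i = 1)
    (F0 : Fin r → Matrix (Fin m) (Fin n) ℂ)
    (hF0 : ∑ j, (F0 j)ᴴ * F0 j = 1)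
    (hFx0 : ∀ i, (∑ j, F0 j * vecMulVec (x i) (star (x i)) * (F0 j)ᴴ) =
      vecMulVec (y i) (star (y i))) :
    ∃ (s : ℕ), 0 < s ∧ n ≤ m * s ∧
      ∃ (v : Fin k → Fin s → ℂ) (U : Matrix (Fin (m * s)) (Fin (m * s)) ℂ),
        (∀ i, star (v i) ⬝ᵥ v i = 1) ∧
        Uᴴ * U = 1 ∧ U * Uᴴ = 1 ∧
        ∀ i, U *ᵥ padVec (m * s) (x i) = kronVec (v i) (y i) := by
  classical
  set s := r + 1 with hs
  set F : Fin s → Matrix (Fin m) (Fin n) ℂ := Fin.snoc F0 0 with hFdef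
  have hF : ∑ t, (F t)ᴴ * F t = 1 := by
    rw [Fin.sum_univ_castSucc]
    simp only [hFdef, Fin.snoc_castSucc, Fin.snoc_last, conjTranspose_zero,
      Matrix.mul_zero, add_zero]
    exact hF0
  have hFx : ∀ i, ∑ t, vecMulVec (F t *ᵥ x i) (star (F t *ᵥ x i))
      = vecMulVec (y i) (star (y i)) := by
    intro i
    rw [Finset.sum_congr rfl fun t _ => (_root_.mul_vecMulVec (F t) (x i)).symm]
    rw [Fin.sum_univ_castSucc]
    simp only [hFdef, Fin.snoc_castSucc, Fin.snoc_last, Matrix.zero_mul,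
      Matrix.mul_zero, add_zero]
    exact hFx0 i
  set c : Fin k → Fin s → ℂ := fun i t => star (y i) ⬝ᵥ (F t *ᵥ x i) with hcdef
  have hdecomp := fun i => rank_one_decomp (fun t => F t *ᵥ x i) (y i) (hy i) (hFx i)
  have hw : ∀ i t, F t *ᵥ x i = c i t • y i := fun i t => (hdecomp i).1 t
  have hvunit : ∀ i, star (c i) ⬝ᵥ c i = 1 := by
    intro i
    calc star (c i) ⬝ᵥ c i = ∑ t, star (c i t) * c i t := rfl
      _ = ∑ t, c i t * star (c i t) := Finset.sum_congr rfl fun t _ => mul_comm _ _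
      _ = 1 := (hdecomp i).2
  set V : Matrix (Fin (m * s)) (Fin n) ℂ :=
    fun a b => stackVec (fun t p => F t p b) a with hVdef
  have hV : ∀ b b', ∑ a, star (V a b) * V a b' = if b = b' then (1:ℂ) else 0 := by
    intro b b'
    have h1 : ∑ a, star (V a b) * V a b'
        = star (stackVec (fun t p => F t p b)) ⬝ᵥ stackVec (fun t p => F t p b') := rfl
    rw [h1, star_stackVec_dot]
    have h2 : ∑ t, star ((fun p => F t p b) : Fin m → ℂ) ⬝ᵥ (fun p => F t p b')
        = (∑ t, (F t)ᴴ * F t) b b' := by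
      rw [Matrix.sum_apply]
      exact Finset.sum_congr rfl fun t _ => by
        simp [mul_apply, conjTranspose_apply, dotProduct]
    rw [h2, hF, one_apply]
  have hVmat : Vᴴ * V = 1 := by
    ext b b'
    rw [mul_apply, one_apply]
    simpa [conjTranspose_apply] using hV b b'
  have hdim : n ≤ m * s := by
    have h1 : (Vᴴ * V).rank = n := by rw [hVmat]; simp [Matrix.rank_one]
    have h2 : (Vᴴ * V).rank ≤ V.rank := Matrix.rank_mul_le_right _ _
    have h3 : V.rank ≤ m * s := by simpa using V.rank_le_card_height
    omega
  have hVx : ∀ i, V *ᵥ x i = kronVec (c i) (y i) := by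
    intro i
    funext a
    obtain ⟨⟨t, p⟩, rfl⟩ := (stIdx m s).surjective a
    have h1 : (V *ᵥ x i) (stIdx m s (t, p)) = ∑ b, F t p b * x i b := by
      simp only [mulVec, dotProduct, hVdef]
      exact Finset.sum_congr rfl fun b _ => by rw [stackVec_stIdx]
    rw [h1]
    have h2 : ∑ b, F t p b * x i b = (F t *ᵥ x i) p := rfl
    rw [h2, hw i t]
    have h3 : kronVec (c i) (y i) (stIdx m s (t, p)) = c i t * y i p :=
      stackVec_stIdx _ t p
    rw [h3]
    simp
  set colE : Fin (m * s) → EuclideanSpace ℂ (Fin (m * s)) :=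
    fun a' => if h : (a' : ℕ) < n then WithLp.toLp 2 (fun a => V a ⟨a', h⟩) else 0 with hcolE
  set sset : Set (Fin (m * s)) := {a' | (a' : ℕ) < n} with hsset
  have hON : Orthonormal ℂ (sset.restrict colE) := by
    rw [orthonormal_iff_ite]
    rintro ⟨i, hi⟩ ⟨j, hj⟩
    have hii : (i : ℕ) < n := hi
    have hjj : (j : ℕ) < n := hj
    have hinner : (inner ℂ (sset.restrict colE ⟨i, hi⟩) (sset.restrict colE ⟨j, hj⟩) : ℂ)
        = ∑ a, star (V a ⟨i, hii⟩) * V a ⟨j, hjj⟩ := by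
      show inner ℂ (colE i) (colE j) = _
      simp only [Set.restrict_apply, hcolE]
      rw [dif_pos hii, dif_pos hjj, PiLp.inner_apply]
      simp [RCLike.inner_apply, mul_comm]
    rw [hinner, hV]
    have hcond : ((⟨i, hii⟩ : Fin n) = ⟨j, hjj⟩) ↔
        ((⟨i, hi⟩ : sset) = ⟨j, hj⟩) := by
      simp only [Fin.mk.injEq, Subtype.mk.injEq, Fin.val_inj]
    by_cases h : (⟨i, hii⟩ : Fin n) = ⟨j, hjj⟩
    · rw [if_pos h, if_pos (hcond.mp h)]
    · rw [if_neg h, if_neg (fun hh => h (hcond.mpr hh))]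
  have hcard : Module.finrank ℂ (EuclideanSpace ℂ (Fin (m * s)))
      = Fintype.card (Fin (m * s)) := by
    simp
  obtain ⟨b, hb⟩ := hON.exists_orthonormalBasis_extension_of_card_eq hcard
  set U : Matrix (Fin (m * s)) (Fin (m * s)) ℂ := fun a a' => b a' a with hUdef
  have hU1 : Uᴴ * U = 1 := by
    ext a' a''
    rw [mul_apply, one_apply]
    have hbo := orthonormal_iff_ite.mp b.orthonormal a' a''
    rw [PiLp.inner_apply] at hbo
    simp only [RCLike.inner_apply] at hbo
    calc ∑ x, Uᴴ a' x * U x a'' = ∑ x, b a'' x * (starRingEnd ℂ) (b a' x) :=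
          Finset.sum_congr rfl fun x _ => by rw [conjTranspose_apply]; exact mul_comm _ _
      _ = _ := by convert hbo
  have hU2 : U * Uᴴ = 1 := mul_eq_one_comm.mp hU1
  have hUx : ∀ i, U *ᵥ padVec (m * s) (x i) = kronVec (c i) (y i) := by
    intro i
    rw [← hVx i]
    funext a
    have hsum : (U *ᵥ padVec (m * s) (x i)) a
        = ∑ a' : Fin (m * s), (if h : (a' : ℕ) < n then U a a' * x i ⟨a', h⟩ else 0) := by
      simp only [mulVec, dotProduct, padVec]
      refine Finset.sum_congr rfl fun a' _ => ?_
      split_ifs with h <;> simp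
    rw [hsum]
    have himg : ∑ a' : Fin (m * s), (if h : (a' : ℕ) < n then U a a' * x i ⟨a', h⟩ else 0)
        = ∑ b' : Fin n, U a (Fin.castLE hdim b') * x i b' := by
      rw [← Finset.sum_subset (Finset.subset_univ
        ((Finset.univ : Finset (Fin n)).image (Fin.castLE hdim)))]
      · rw [Finset.sum_image (fun _ _ _ _ h => Fin.castLE_injective hdim h)]
        refine Finset.sum_congr rfl fun b' _ => ?_
        rw [dif_pos (by simpa using b'.isLt)]
        congr 1
      · intro a' _ ha'
        rw [dif_neg]
        intro h
        exact ha' (Finset.mem_image.mpr ⟨⟨a', h⟩, Finset.mem_univ _, Fin.ext rfl⟩)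
    rw [himg]
    have hUcol : ∀ b' : Fin n, U a (Fin.castLE hdim b') = V a b' := by
      intro b'
      have hlt : ((Fin.castLE hdim b' : Fin (m * s)) : ℕ) < n := by
        simpa using b'.isLt
      have hmem : Fin.castLE hdim b' ∈ sset := hlt
      have happ := congrArg (fun w => w a) (hb (Fin.castLE hdim b') hmem)
      have hcolval : colE (Fin.castLE hdim b')
          = WithLp.toLp 2 (fun a0 => V a0 ⟨((Fin.castLE hdim b' : Fin (m * s)) : ℕ), hlt⟩) := by
        simp only [hcolE]
        rw [dif_pos hlt]
      rw [hcolval] at happ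
      have hfin : (⟨((Fin.castLE hdim b' : Fin (m * s)) : ℕ), hlt⟩ : Fin n) = b' :=
        Fin.ext (by simp)
      show b (Fin.castLE hdim b') a = V a b'
      rw [happ]
      simp [hfin]
    rw [Finset.sum_congr rfl fun b' _ => by rw [hUcol b']]
    rfl
  exact ⟨s, Nat.succ_pos r, hdim, c, U, hvunit, hU1, hU2, hUx⟩


section Back
variable {n m s : ℕ}


lemma backward_dir {k : ℕ} (x : Fin k → Fin n → ℂ) (y : Fin k → Fin m → ℂ)
    (v : Fin k → Fin s → ℂ) (U : Matrix (Fin (m * s)) (Fin (m * s)) ℂ)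
    (hn : n ≤ m * s)
    (hv : ∀ i, star (v i) ⬝ᵥ v i = 1)
    (hU1 : Uᴴ * U = 1)
    (hUx : ∀ i, U *ᵥ padVec (m * s) (x i) = kronVec (v i) (y i)) :
    ∃ (r : ℕ) (F : Fin r → Matrix (Fin m) (Fin n) ℂ),
        (∑ j, (F j)ᴴ * F j = 1) ∧
        ∀ i, (∑ j, F j * vecMulVec (x i) (star (x i)) * (F j)ᴴ) =
          vecMulVec (y i) (star (y i)) := by
  classical
  set ι : Matrix (Fin (m * s)) (Fin n) ℂ :=
    fun a b => if a = Fin.castLE hn b then 1 else 0 with hιdef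
  set P : Fin s → Matrix (Fin m) (Fin (m * s)) ℂ :=
    fun t p a => if a = stIdx m s (t, p) then 1 else 0 with hPdef
  have hι : ιᴴ * ι = 1 := by
    ext b b'
    rw [mul_apply]; simp only [conjTranspose_apply]
    simp only [mul_apply, conjTranspose_apply, hιdef, apply_ite (star : ℂ → ℂ),
      star_one, star_zero, ite_mul, one_mul, zero_mul, Finset.sum_ite_eq',
      Finset.mem_univ, if_true, one_apply]
    by_cases h : b = b' <;> simp [h, (Fin.castLE_injective hn).eq_iff]
  have hP : ∑ t, (P t)ᴴ * P t = 1 := by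
    ext a a'
    rw [Matrix.sum_apply]
    simp only [mul_apply, conjTranspose_apply]
    simp only [mul_apply, conjTranspose_apply, hPdef, apply_ite (star : ℂ → ℂ),
      star_one, star_zero, ite_mul, one_mul, zero_mul]
    have : ∀ (t : Fin s) (p : Fin m),
        (if a = stIdx m s (t, p) then (if a' = stIdx m s (t, p) then (1:ℂ) else 0) else 0)
        = (fun c => (if a = c then (if a' = c then (1:ℂ) else 0) else 0)) (stIdx m s (t, p)) :=
      fun _ _ => rfl
    rw [Finset.sum_congr rfl fun t _ => Finset.sum_congr rfl fun p _ => this t p]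
    rw [← sum_fin_mul (fun c => (if a = c then (if a' = c then (1:ℂ) else 0) else 0))]
    simp only [Finset.sum_ite_eq, Finset.mem_univ, if_true, one_apply]
    by_cases h : a = a' <;> simp [h, eq_comm]
  have hιv : ∀ i, ι *ᵥ x i = padVec (m * s) (x i) := by
    intro i
    ext a
    simp only [mulVec, dotProduct, hιdef, ite_mul, one_mul, zero_mul, padVec]
    by_cases h : (a : ℕ) < n
    · rw [dif_pos h]
      have : ∀ b : Fin n, a = Fin.castLE hn b ↔ b = ⟨a, h⟩ := by
        intro b; constructor <;> intro hh <;> simp [Fin.ext_iff] at hh ⊢ <;> omega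
      simp only [this, Finset.sum_ite_eq', Finset.mem_univ, if_true]
    · rw [dif_neg h]
      refine Finset.sum_eq_zero fun b _ => ?_
      rw [if_neg]
      intro hh
      apply h; rw [hh]; simp only [Fin.coe_castLE]; exact b.isLt
  have hPst : ∀ (t : Fin s) (z : Fin s → Fin m → ℂ), P t *ᵥ stackVec z = z t := by
    intro t z
    ext p
    simp only [mulVec, dotProduct, hPdef, ite_mul, one_mul, zero_mul,
      Finset.sum_ite_eq', Finset.mem_univ, if_true]
    exact stackVec_stIdx z t p
  refine ⟨s, fun t => P t * U * ι, ?_, ?_⟩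
  · have step : ∀ t : Fin s, (P t * U * ι)ᴴ * (P t * U * ι)
        = ιᴴ * (Uᴴ * (((P t)ᴴ * P t) * (U * ι))) := by
      intro t; simp only [conjTranspose_mul, Matrix.mul_assoc]
    rw [Finset.sum_congr rfl fun t _ => step t]
    simp only [← Matrix.mul_sum, ← Matrix.sum_mul]
    rw [hP, Matrix.one_mul, ← Matrix.mul_assoc, ← Matrix.mul_assoc, Matrix.mul_assoc ιᴴ Uᴴ U, hU1, Matrix.mul_one, hι]
  · intro i
    have hFx : ∀ t : Fin s, (P t * U * ι) *ᵥ x i = v i t • y i := by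
      intro t
      rw [← Matrix.mulVec_mulVec, ← Matrix.mulVec_mulVec, hιv i, hUx i]
      have : kronVec (v i) (y i) = stackVec (fun t p => v i t * y i p) := rfl
      rw [this, hPst]
      rfl
    have step : ∀ t : Fin s, P t * U * ι * vecMulVec (x i) (star (x i)) * (P t * U * ι)ᴴ
        = (v i t * star (v i t)) • vecMulVec (y i) (star (y i)) := by
      intro t
      rw [_root_.mul_vecMulVec, hFx t, vecMulVec_smul_star]
    rw [Finset.sum_congr rfl fun t _ => step t, ← Finset.sum_smul]
    have : ∑ t, v i t * star (v i t) = 1 := by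
      rw [← hv i]; simp [dotProduct, mul_comm]
    rw [this, one_smul]

end Back

/-- TPCP maps between pure state families, characterized via a unitary dilation. -/
theorem stmt_12 {n m k : ℕ} (x : Fin k → Fin n → ℂ) (y : Fin k → Fin m → ℂ)
    (hx : ∀ i, star (x i) ⬝ᵥ x i = 1) (hy : ∀ i, star (y i) ⬝ᵥ y i = 1) :
    (∃ (r : ℕ) (F : Fin r → Matrix (Fin m) (Fin n) ℂ),
        (∑ j, (F j)ᴴ * F j = 1) ∧
        ∀ i, (∑ j, F j * vecMulVec (x i) (star (x i)) * (F j)ᴴ) =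
          vecMulVec (y i) (star (y i))) ↔
    (∃ (s : ℕ), 0 < s ∧ n ≤ m * s ∧
      ∃ (v : Fin k → Fin s → ℂ) (U : Matrix (Fin (m * s)) (Fin (m * s)) ℂ),
        (∀ i, star (v i) ⬝ᵥ v i = 1) ∧
        Uᴴ * U = 1 ∧ U * Uᴴ = 1 ∧
        ∀ i, U *ᵥ padVec (m * s) (x i) = kronVec (v i) (y i)) := by
  constructor
  · rintro ⟨r, F0, hF0, hFx0⟩
    exact forward_dir x y hy F0 hF0 hFx0
  · rintro ⟨s, hs, hn, v, U, hv, hU1, hU2, hUx⟩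
    exact backward_dir x y v U hn hv hU1 hUx
end

section
/- Let x₁,…,x_k ∈ ℂⁿ and y₁,…,y_k ∈ ℂᵐ be nonzero vectors, and let X = [x₁|…|x_k] ∈ M_{n,k}(ℂ) and Y = [y₁|…|y_k] ∈ M_{m,k}(ℂ) be the matrices with these columns. There exists a completely positive map T : M_n(ℂ) → M_m(ℂ) with T(x_ix_iᴴ) = y_iy_iᴴ for i = 1,…,k if and only if there exists a positive semidefinite matrix M ∈ M_k(ℂ) with all diagonal entries equal to 1 such that every vector v ∈ ℂᵏ with (XᴴX)v = 0 also satisfies (M ∘ (YᴴY))v = 0. -/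
open Matrix
open scoped ComplexOrder

lemma exists_matrix_factor {n k m' : ℕ} (X : Matrix (Fin n) (Fin k) ℂ)
    (Z : Matrix (Fin m') (Fin k) ℂ)
    (h : ∀ v, X *ᵥ v = 0 → Z *ᵥ v = 0) :
    ∃ F : Matrix (Fin m') (Fin n) ℂ, ∀ v, F *ᵥ (X *ᵥ v) = Z *ᵥ v := by
  have hker : LinearMap.ker X.mulVecLin ≤ LinearMap.ker Z.mulVecLin := fun v hv => h v hv
  let ψ : ((Fin k → ℂ) ⧸ LinearMap.ker X.mulVecLin) →ₗ[ℂ] (Fin m' → ℂ) :=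
    Submodule.liftQ _ Z.mulVecLin hker
  let φ : (LinearMap.range X.mulVecLin) →ₗ[ℂ] (Fin m' → ℂ) :=
    ψ.comp (X.mulVecLin.quotKerEquivRange.symm : _ →ₗ[ℂ] _)
  obtain ⟨g, hg⟩ := LinearMap.exists_extend φ
  refine ⟨LinearMap.toMatrix' g, fun v => ?_⟩
  have h1 : (LinearMap.toMatrix' g) *ᵥ (X *ᵥ v) = g (X *ᵥ v) := by
    rw [← Matrix.toLin'_apply, Matrix.toLin'_toMatrix']
  rw [h1]
  have hmem : X *ᵥ v ∈ LinearMap.range X.mulVecLin := ⟨v, rfl⟩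
  have h2 : g (X *ᵥ v) = φ ⟨X *ᵥ v, hmem⟩ := by
    have := congrArg (fun f => f ⟨X *ᵥ v, hmem⟩) hg
    simpa using this
  rw [h2]
  have h3 : X.mulVecLin.quotKerEquivRange.symm ⟨X *ᵥ v, hmem⟩
      = Submodule.Quotient.mk v :=
    LinearMap.quotKerEquivRange_symm_apply_image X.mulVecLin v hmem
  show ψ (X.mulVecLin.quotKerEquivRange.symm ⟨X *ᵥ v, hmem⟩) = _
  rw [h3]
  exact Submodule.liftQ_apply _ _ _

lemma rank_one_decomp_s17 {m r : ℕ} (y : Fin m → ℂ) (hy : y ≠ 0) (z : Fin r → Fin m → ℂ)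
    (h : ∀ a b, (∑ j, z j a * star (z j b)) = y a * star (y b)) :
    ∃ c : Fin r → ℂ, (∀ j, z j = c j • y) ∧ ∑ j, star (c j) * c j = 1 := by
  have expand : ∀ w u : Fin m → ℂ, (star w ⬝ᵥ u) * star (star w ⬝ᵥ u)
      = ∑ a, ∑ b, (star (w a) * w b) * (u a * star (u b)) := by
    intro w u
    simp only [dotProduct, star_sum, star_mul', star_star, Pi.star_apply, Finset.sum_mul,
      Finset.mul_sum]
    rw [Finset.sum_comm]
    refine Finset.sum_congr rfl fun a _ => Finset.sum_congr rfl fun b _ => by ring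
  have key : ∀ w : Fin m → ℂ, ∑ j, (star w ⬝ᵥ z j) * star (star w ⬝ᵥ z j)
      = (star w ⬝ᵥ y) * star (star w ⬝ᵥ y) := by
    intro w
    calc ∑ j, (star w ⬝ᵥ z j) * star (star w ⬝ᵥ z j)
        = ∑ j, ∑ a, ∑ b, (star (w a) * w b) * (z j a * star (z j b)) := by
          simp only [expand]
      _ = ∑ a, ∑ b, (star (w a) * w b) * (∑ j, z j a * star (z j b)) := by
          rw [Finset.sum_comm]
          refine Finset.sum_congr rfl fun a _ => ?_
          rw [Finset.sum_comm]
          refine Finset.sum_congr rfl fun b _ => ?_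
          rw [Finset.mul_sum]
      _ = ∑ a, ∑ b, (star (w a) * w b) * (y a * star (y b)) := by simp only [h]
      _ = (star w ⬝ᵥ y) * star (star w ⬝ᵥ y) := (expand w y).symm
  have zero_of_sum : ∀ (a : Fin r → ℂ), (∑ j, a j * star (a j)) = 0 → ∀ j, a j = 0 := by
    intro a ha j
    have h0 : (↑(∑ j, Complex.normSq (a j)) : ℂ) = 0 := by
      rw [Complex.ofReal_sum]
      simpa only [Complex.star_def, Complex.mul_conj] using ha
    rw [Complex.ofReal_eq_zero] at h0
    have := (Finset.sum_eq_zero_iff_of_nonneg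
      (fun j _ => Complex.normSq_nonneg (a j))).mp h0 j (Finset.mem_univ j)
    exact Complex.normSq_eq_zero.mp this
  set β : ℂ := star y ⬝ᵥ y with hβ
  have hβ0 : β ≠ 0 := fun h0 => hy (dotProduct_star_self_eq_zero.mp h0)
  have hcol : ∀ j, z j = ((star y ⬝ᵥ z j) / β) • y := by
    intro j
    set cj : ℂ := (star y ⬝ᵥ z j) / β with hcj
    set w : Fin m → ℂ := z j - cj • y with hw
    have hyw : star y ⬝ᵥ w = 0 := by
      rw [hw, dotProduct_sub, dotProduct_smul]
      rw [hcj]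
      rw [smul_eq_mul, ← hβ, div_mul_cancel₀ _ hβ0, sub_self]
    have hwy : star w ⬝ᵥ y = 0 := by
      have h1 : star w ⬝ᵥ y = star (star y ⬝ᵥ w) := by
        simp [dotProduct, star_sum, mul_comm]
      rw [h1, hyw, star_zero]
    have hkw := key w
    rw [hwy, zero_mul] at hkw
    have hz : ∀ l, star w ⬝ᵥ z l = 0 := zero_of_sum _ hkw
    have hww : star w ⬝ᵥ w = 0 := by
      have h1 : star w ⬝ᵥ w = star w ⬝ᵥ z j - cj • (star w ⬝ᵥ y) := by
        rw [← dotProduct_smul, ← dotProduct_sub]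
      rw [h1, hz j, hwy, smul_zero, sub_zero]
    have hw0 : w = 0 := dotProduct_star_self_eq_zero.mp hww
    have : z j - cj • y = 0 := by rw [← hw]; exact hw0
    exact sub_eq_zero.mp this
  refine ⟨fun j => (star y ⬝ᵥ z j) / β, hcol, ?_⟩
  have hββ : β * star β ≠ 0 := mul_ne_zero hβ0 (star_ne_zero.mpr hβ0)
  apply mul_right_cancel₀ hββ
  rw [one_mul, Finset.sum_mul]
  have hky := key y
  have hterm : ∀ j, star y ⬝ᵥ z j * star (star y ⬝ᵥ z j)
      = (star ((star y ⬝ᵥ z j) / β) * ((star y ⬝ᵥ z j) / β)) * (β * star β) := by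
    intro j
    rw [star_div₀, div_mul_div_comm, mul_comm β (star β),
      div_mul_cancel₀ _ (mul_ne_zero (star_ne_zero.mpr hβ0) hβ0), mul_comm]
  rw [Finset.sum_congr rfl (fun j _ => hterm j)] at hky
  exact hky

lemma sandwich {n m : ℕ} (F : Matrix (Fin m) (Fin n) ℂ) (u : Fin n → ℂ) (a b : Fin m) :
    (F * vecMulVec u (star u) * Fᴴ) a b = (F *ᵥ u) a * star ((F *ᵥ u) b) := by
  simp only [Matrix.mul_apply, vecMulVec_apply, Pi.star_apply, conjTranspose_apply, mulVec,
    dotProduct, star_sum, star_mul', Finset.sum_mul, Finset.mul_sum]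
  refine Finset.sum_congr rfl fun c _ => Finset.sum_congr rfl fun d _ => by ring

lemma hadamard_entry {m k r : ℕ} (y : Fin k → Fin m → ℂ) (Y : Matrix (Fin m) (Fin k) ℂ)
    (hY : Y = Matrix.of fun a i => y i a) (M : Matrix (Fin k) (Fin k) ℂ)
    (c : Fin k → Fin r → ℂ) (hM : ∀ i l, M i l = ∑ j, star (c i j) * c l j)
    (v : Fin k → ℂ) (i : Fin k) :
    (Matrix.hadamard M (Yᴴ * Y) *ᵥ v) i
      = ∑ j, star (c i j) * (star (y i) ⬝ᵥ (fun a => ∑ l, v l * c l j * y l a)) := by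
  have lhs_eq : (Matrix.hadamard M (Yᴴ * Y) *ᵥ v) i
      = ∑ l, ∑ j, ∑ a, star (c i j) * c l j * (star (y i a) * y l a) * v l := by
    simp only [mulVec, dotProduct, hadamard_apply, Matrix.mul_apply, conjTranspose_apply,
      hM, hY, of_apply, Pi.star_apply, Finset.sum_mul, Finset.mul_sum]
    exact Finset.sum_congr rfl fun l _ => Finset.sum_comm
  have rhs_eq : (∑ j, star (c i j) * (star (y i) ⬝ᵥ (fun a => ∑ l, v l * c l j * y l a)))
      = ∑ l, ∑ j, ∑ a, star (c i j) * c l j * (star (y i a) * y l a) * v l := by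
    simp only [dotProduct, Pi.star_apply, Finset.mul_sum]
    refine (Finset.sum_congr rfl fun j _ => Finset.sum_comm).trans ?_
    refine (Finset.sum_comm).trans ?_
    exact Finset.sum_congr rfl fun l _ => Finset.sum_congr rfl fun j _ =>
      Finset.sum_congr rfl fun a _ => by ring
  rw [lhs_eq, rhs_eq]

lemma dot_self_expand {m k : ℕ} (y : Fin k → Fin m → ℂ) (v c' : Fin k → ℂ) :
    (star (fun a => ∑ l, v l * c' l * y l a) : Fin m → ℂ)
        ⬝ᵥ (fun a => ∑ l, v l * c' l * y l a)
      = ∑ i, star (v i) * (star (c' i) * (star (y i)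
          ⬝ᵥ (fun a => ∑ l, v l * c' l * y l a))) := by
  simp only [dotProduct, Pi.star_apply, star_sum, star_mul', Finset.sum_mul, Finset.mul_sum]
  refine (Finset.sum_congr rfl fun a _ => Finset.sum_comm).trans ?_
  refine Finset.sum_comm.trans ?_
  exact Finset.sum_congr rfl fun p _ => Finset.sum_congr rfl fun a _ =>
    Finset.sum_congr rfl fun q _ => by ring

lemma zero_of_sum_vec {m r : ℕ} (u : Fin r → Fin m → ℂ)
    (h : ∑ j, star (u j) ⬝ᵥ u j = 0) : ∀ j, u j = 0 := by
  have hd : ∀ j, star (u j) ⬝ᵥ u j = (↑(∑ a, Complex.normSq (u j a)) : ℂ) := by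
    intro j
    simp only [dotProduct, Pi.star_apply, Complex.ofReal_sum, Complex.star_def]
    exact Finset.sum_congr rfl fun a _ => by
      rw [Complex.normSq_eq_conj_mul_self]
  rw [Finset.sum_congr rfl (fun j _ => hd j), ← Complex.ofReal_sum,
    Complex.ofReal_eq_zero] at h
  intro j
  funext a
  have h1 := (Finset.sum_eq_zero_iff_of_nonneg
    (fun j _ => Finset.sum_nonneg fun a _ => Complex.normSq_nonneg (u j a))).mp h j
    (Finset.mem_univ j)
  have h2 := (Finset.sum_eq_zero_iff_of_nonneg
    (fun a _ => Complex.normSq_nonneg (u j a))).mp h1 a (Finset.mem_univ a)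
  exact Complex.normSq_eq_zero.mp h2

/-- A completely positive map sending `xᵢxᵢᴴ ↦ yᵢyᵢᴴ` exists iff there is a positive
semidefinite `M` with unit diagonal such that `ker XᴴX ⊆ ker (M ∘ YᴴY)`. -/
theorem stmt_17 {n m k : ℕ} (x : Fin k → Fin n → ℂ) (y : Fin k → Fin m → ℂ)
    (hx : ∀ i, x i ≠ 0) (hy : ∀ i, y i ≠ 0)
    (X : Matrix (Fin n) (Fin k) ℂ) (hX : X = Matrix.of fun a i => x i a)
    (Y : Matrix (Fin m) (Fin k) ℂ) (hY : Y = Matrix.of fun a i => y i a) :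
    (∃ (r : ℕ) (F : Fin r → Matrix (Fin m) (Fin n) ℂ),
        ∀ i, (∑ j, F j * vecMulVec (x i) (star (x i)) * (F j)ᴴ) =
          vecMulVec (y i) (star (y i))) ↔
    (∃ M : Matrix (Fin k) (Fin k) ℂ, M.PosSemidef ∧ (∀ i, M i i = 1) ∧
        ∀ v : Fin k → ℂ, (Xᴴ * X) *ᵥ v = 0 → Matrix.hadamard M (Yᴴ * Y) *ᵥ v = 0) := by
  constructor
  · rintro ⟨r, F, hF⟩
    have h' : ∀ i a b, (∑ j, (F j *ᵥ x i) a * star ((F j *ᵥ x i) b))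
        = y i a * star (y i b) := by
      intro i a b
      have h1 := congrFun (congrFun (hF i) a) b
      rw [Matrix.sum_apply] at h1
      rw [Finset.sum_congr rfl (fun j _ => (sandwich (F j) (x i) a b).symm)]
      rw [h1, vecMulVec_apply, Pi.star_apply]
    choose c hc1 hc2 using fun i => rank_one_decomp_s17 (y i) (hy i) (fun j => F j *ᵥ x i) (h' i)
    set C : Matrix (Fin r) (Fin k) ℂ := Matrix.of fun j i => c i j with hC
    refine ⟨Cᴴ * C, posSemidef_conjTranspose_mul_self C, ?_, ?_⟩
    · intro i
      have : (Cᴴ * C) i i = ∑ j, star (c i j) * c i j := by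
        simp [Matrix.mul_apply, conjTranspose_apply, hC]
      rw [this, hc2 i]
    · intro v hv
      have hXv : X *ᵥ v = 0 := (conjTranspose_mul_self_mulVec_eq_zero X v).mp hv
      have hMc : ∀ i l, (Cᴴ * C) i l = ∑ j, star (c i j) * c l j := by
        intro i l
        simp [Matrix.mul_apply, conjTranspose_apply, hC]
      funext i
      rw [Pi.zero_apply, hadamard_entry y Y hY (Cᴴ * C) c hMc v i]
      have hu : ∀ j, (fun a => ∑ l, v l * c l j * y l a) = F j *ᵥ (X *ᵥ v) := by
        intro j
        funext a
        simp only [mulVec, dotProduct, hX, of_apply, Finset.mul_sum]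
        rw [Finset.sum_comm]
        refine Finset.sum_congr rfl fun l _ => ?_
        have h2 : (∑ b, F j a b * x l b) = c l j * y l a := by
          have := congrFun (hc1 l j) a
          simpa [mulVec, dotProduct] using this
        calc v l * c l j * y l a = (∑ b, F j a b * x l b) * v l := by rw [h2]; ring
          _ = ∑ b, F j a b * (x l b * v l) := by
              rw [Finset.sum_mul]
              exact Finset.sum_congr rfl fun b _ => by ring
      refine Finset.sum_eq_zero fun j _ => ?_
      rw [hu j, hXv, mulVec_zero, dotProduct_zero, mul_zero]
  · rintro ⟨M, hM, hdiag, hker⟩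
    obtain ⟨P, hP⟩ : ∃ P : Matrix (Fin k) (Fin k) ℂ, M = Pᴴ * P := by
      open scoped MatrixOrder Matrix.Norms.L2Operator in
      exact CStarAlgebra.nonneg_iff_eq_star_mul_self.mp hM.nonneg
    set c : Fin k → Fin k → ℂ := fun i j => P j i with hc
    have hMc : ∀ i l, M i l = ∑ j, star (c i j) * c l j := by
      intro i l
      rw [hP]
      simp [Matrix.mul_apply, conjTranspose_apply, hc]
    set Z : Fin k → Matrix (Fin m) (Fin k) ℂ := fun j => Matrix.of fun a l => c l j * y l a
      with hZ
    have hZv : ∀ j (v : Fin k → ℂ), Z j *ᵥ v = fun a => ∑ l, v l * c l j * y l a := by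
      intro j v
      funext a
      simp only [mulVec, dotProduct, hZ, of_apply]
      exact Finset.sum_congr rfl fun l _ => by ring
    have hZker : ∀ (v : Fin k → ℂ), X *ᵥ v = 0 → ∀ j, Z j *ᵥ v = 0 := by
      intro v hv
      have hv' : (Xᴴ * X) *ᵥ v = 0 := by rw [← mulVec_mulVec, hv, mulVec_zero]
      have h0 := hker v hv'
      have hsum : ∑ j, star (Z j *ᵥ v) ⬝ᵥ (Z j *ᵥ v) = 0 := by
        have hcalc : ∑ j, star (Z j *ᵥ v) ⬝ᵥ (Z j *ᵥ v)
            = ∑ i, star (v i) * ((Matrix.hadamard M (Yᴴ * Y) *ᵥ v) i) := by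
          calc ∑ j, star (Z j *ᵥ v) ⬝ᵥ (Z j *ᵥ v)
              = ∑ j, ∑ i, star (v i) * (star (c i j) * (star (y i)
                  ⬝ᵥ (fun a => ∑ l, v l * c l j * y l a))) := by
                refine Finset.sum_congr rfl fun j _ => ?_
                rw [hZv j v]
                exact dot_self_expand y v (fun l => c l j)
            _ = ∑ i, ∑ j, star (v i) * (star (c i j) * (star (y i)
                  ⬝ᵥ (fun a => ∑ l, v l * c l j * y l a))) := Finset.sum_comm
            _ = ∑ i, star (v i) * ((Matrix.hadamard M (Yᴴ * Y) *ᵥ v) i) := by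
                refine Finset.sum_congr rfl fun i _ => ?_
                rw [hadamard_entry y Y hY M c hMc v i, Finset.mul_sum]
        rw [hcalc, h0]
        simp
      exact zero_of_sum_vec _ hsum
    have hFex : ∀ j, ∃ F : Matrix (Fin m) (Fin n) ℂ, ∀ v, F *ᵥ (X *ᵥ v) = Z j *ᵥ v := by
      intro j
      exact exists_matrix_factor X (Z j) (fun v hv => hZker v hv j)
    choose F hF using hFex
    refine ⟨k, F, fun i => ?_⟩
    have hXe : X *ᵥ Pi.single i 1 = x i := by
      funext a
      simp [mulVec, dotProduct, hX, Pi.single_apply, Finset.sum_ite_eq']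
    have hZe : ∀ j, Z j *ᵥ Pi.single i 1 = c i j • y i := by
      intro j
      funext a
      rw [hZv j]
      simp [Pi.single_apply, Finset.sum_ite_eq']
    have hFx : ∀ j, F j *ᵥ x i = c i j • y i := by
      intro j
      rw [← hXe, hF j, hZe j]
    ext a b
    rw [Matrix.sum_apply]
    rw [Finset.sum_congr rfl (fun j _ => sandwich (F j) (x i) a b)]
    simp only [hFx, Pi.smul_apply, smul_eq_mul, star_mul', vecMulVec_apply, Pi.star_apply]
    calc ∑ j, c i j * y i a * (star (c i j) * star (y i b))
        = ∑ j, (star (c i j) * c i j) * (y i a * star (y i b)) := by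
          exact Finset.sum_congr rfl fun j _ => by ring
      _ = (∑ j, star (c i j) * c i j) * (y i a * star (y i b)) := by rw [Finset.sum_mul]
      _ = y i a * star (y i b) := by rw [← hMc i i, hdiag i, one_mul]
end

section
/- Let x₁,…,x_k ∈ ℂⁿ and y₁,…,y_k ∈ ℂᵐ be nonzero vectors, let B ∈ M_m(ℂ) be positive semidefinite, let X = [x₁|…|x_k] ∈ M_{n,k}(ℂ) and Y = [y₁|…|y_k] ∈ M_{m,k}(ℂ), and let G ∈ M_k(ℂ) be the Moore–Penrose inverse of XᴴX, i.e., the unique matrix satisfying (XᴴX)G(XᴴX) = XᴴX, G(XᴴX)G = G, ((XᴴX)G)ᴴ = (XᴴX)G, and (G(XᴴX))ᴴ = G(XᴴX). There exists a completely positive map T : M_n(ℂ) → M_m(ℂ) with T(I_n) = B and T(x_ix_iᴴ) = y_iy_iᴴ for i = 1,…,k if and only if there exists a positive semidefinite matrix M ∈ M_k(ℂ) with all diagonal entries equal to 1 such that (1) every vector v ∈ ℂᵏ with (XᴴX)v = 0 also satisfies (M ∘ (YᴴY))v = 0, and (2) B − Y(M̄ ∘ G)Yᴴ is positive semidefinite,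 with B = Y(M̄ ∘ G)Yᴴ in the case that X has rank n. Here M̄ denotes the entrywise complex conjugate of M. -/
open Matrix
open scoped ComplexOrder

private theorem mp_herm {k : ℕ} (A G : Matrix (Fin k) (Fin k) ℂ) (hA : Aᴴ = A)
    (hG1 : A * G * A = A) (hG2 : G * A * G = G)
    (hG3 : (A * G)ᴴ = A * G) (hG4 : (G * A)ᴴ = G * A) : Gᴴ = G := by
  have hH1 : A * Gᴴ * A = A := by
    have := congrArg conjTranspose hG1
    simpa [conjTranspose_mul, hA, Matrix.mul_assoc] using this
  have hH2 : Gᴴ * A * Gᴴ = Gᴴ := by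
    have := congrArg conjTranspose hG2
    simpa [conjTranspose_mul, hA, Matrix.mul_assoc] using this
  have eAH : A * Gᴴ = G * A := by
    calc A * Gᴴ = (G * Aᴴ)ᴴ := by simp [conjTranspose_mul]
      _ = (G * A)ᴴ := by rw [hA]
      _ = G * A := hG4
  have eHA : Gᴴ * A = A * G := by
    calc Gᴴ * A = (Aᴴ * G)ᴴ := by simp [conjTranspose_mul]
      _ = (A * G)ᴴ := by rw [hA]
      _ = A * G := hG3
  have herm1 : (A * Gᴴ)ᴴ = A * Gᴴ := by
    rw [eAH]; exact hG4.symm ▸ hG4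
  have hcomm : A * G = G * A := by
    calc A * G = (A * Gᴴ * A) * G := by rw [hH1]
      _ = (A * Gᴴ) * (A * G) := by simp [Matrix.mul_assoc]
      _ = (A * Gᴴ)ᴴ * (A * G)ᴴ := by rw [herm1, hG3]
      _ = (G * Aᴴ) * (Gᴴ * Aᴴ) := by simp [conjTranspose_mul]
      _ = G * (A * Gᴴ * A) := by rw [hA]; simp [Matrix.mul_assoc]
      _ = G * A := by rw [hH1]
  calc Gᴴ = Gᴴ * A * Gᴴ := hH2.symm
    _ = (Gᴴ * A) * Gᴴ := by simp [Matrix.mul_assoc]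
    _ = (G * A) * Gᴴ := by rw [eHA, hcomm]
    _ = G * (A * Gᴴ) := by simp [Matrix.mul_assoc]
    _ = G * (G * A) := by rw [eAH]
    _ = G * (A * G) := by rw [hcomm]
    _ = G * A * G := by simp [Matrix.mul_assoc]
    _ = G := hG2

private theorem xgx {n k : ℕ} (X : Matrix (Fin n) (Fin k) ℂ) (G : Matrix (Fin k) (Fin k) ℂ)
    (hGh : Gᴴ = G) (hG1 : (Xᴴ * X) * G * (Xᴴ * X) = Xᴴ * X) :
    X * G * (Xᴴ * X) = X := by
  rw [← sub_eq_zero, ← conjTranspose_mul_self_eq_zero]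
  have e1 : (Xᴴ*X) * G * ((Xᴴ*X) * G * (Xᴴ*X)) = Xᴴ*X := by
    rw [hG1]; exact hG1
  have expand : (X * G * (Xᴴ * X) - X)ᴴ * (X * G * (Xᴴ * X) - X)
      = (Xᴴ*X) * G * ((Xᴴ*X) * G * (Xᴴ*X)) - (Xᴴ*X) * G * (Xᴴ*X)
        - (Xᴴ*X) * G * (Xᴴ*X) + Xᴴ*X := by
    simp only [conjTranspose_sub, conjTranspose_mul, conjTranspose_conjTranspose, hGh,
      Matrix.sub_mul, Matrix.mul_sub]
    simp only [Matrix.mul_assoc]; abel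
  rw [expand, e1, hG1]
  abel

private theorem proj_prod {n k : ℕ} (X : Matrix (Fin n) (Fin k) ℂ)
    (G : Matrix (Fin k) (Fin k) ℂ)
    (hGh : Gᴴ = G) (hPX : (X * G * Xᴴ) * X = X) :
    ((1 : Matrix (Fin n) (Fin n) ℂ) - X * G * Xᴴ)
      * ((1 : Matrix (Fin n) (Fin n) ℂ) - X * G * Xᴴ)ᴴ = 1 - X * G * Xᴴ := by
  set P : Matrix (Fin n) (Fin n) ℂ := X * G * Xᴴ with hP
  have hPh : Pᴴ = P := by
    rw [hP]; simp [conjTranspose_mul, hGh, Matrix.mul_assoc]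
  have hPP : P * P = P := by
    calc P * P = (P * X) * G * Xᴴ := by rw [hP]; simp [Matrix.mul_assoc]
      _ = P := by rw [hPX]
  rw [conjTranspose_sub, hPh, conjTranspose_one]
  rw [Matrix.sub_mul, Matrix.mul_sub, Matrix.mul_sub, hPP]
  simp

private theorem projP_one {n k : ℕ} (X : Matrix (Fin n) (Fin k) ℂ)
    (G : Matrix (Fin k) (Fin k) ℂ)
    (hPX : (X * G * Xᴴ) * X = X) (hrank : X.rank = n) :
    X * G * Xᴴ = (1 : Matrix (Fin n) (Fin n) ℂ) := by
  have hsurj : Function.Surjective X.mulVecLin := by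
    rw [← LinearMap.range_eq_top]
    apply Submodule.eq_top_of_finrank_eq
    rw [← Matrix.rank]
    simp [hrank]
  have hfix : ∀ v : Fin n → ℂ, (X * G * Xᴴ) *ᵥ v = v := by
    intro v
    obtain ⟨w, hw⟩ := hsurj v
    rw [← hw, Matrix.mulVecLin_apply, Matrix.mulVec_mulVec, hPX]
  ext i j
  have := congrFun (hfix (Pi.single j 1)) i
  simpa [Matrix.one_apply, Pi.single_apply, eq_comm] using this

private lemma vmv_mulVec {m : ℕ} (u v z : Fin m → ℂ) :
    vecMulVec u v *ᵥ z = (v ⬝ᵥ z) • u := by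
  ext a
  simp [vecMulVec_apply, mulVec, dotProduct, Finset.mul_sum, mul_assoc, mul_comm, mul_left_comm]

private lemma sum_mulVec'_s18 {p q r : ℕ} (A : Fin r → Matrix (Fin p) (Fin q) ℂ) (z : Fin q → ℂ) :
    (∑ j, A j) *ᵥ z = ∑ j, (A j *ᵥ z) := by
  ext a
  simp only [mulVec, dotProduct, Matrix.sum_apply, Finset.sum_apply, Finset.sum_mul]
  rw [Finset.sum_comm]

private lemma dotProduct_sum' {m r : ℕ} (w : Fin m → ℂ) (f : Fin r → Fin m → ℂ) :
    w ⬝ᵥ (∑ j, f j) = ∑ j, w ⬝ᵥ f j := by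
  simp only [dotProduct, Finset.sum_apply, Finset.mul_sum]
  rw [Finset.sum_comm]

private lemma quad_eval {m : ℕ} (u z : Fin m → ℂ) :
    star z ⬝ᵥ (vecMulVec u (star u) *ᵥ z)
      = ((starRingEnd ℂ) (star z ⬝ᵥ u)) * (star z ⬝ᵥ u) := by
  rw [vmv_mulVec, dotProduct_smul]
  congr 1
  rw [star_dotProduct, starRingEnd_apply]

private lemma rank1_sum {m r : ℕ} (u : Fin r → Fin m → ℂ) (y : Fin m → ℂ) (hy : y ≠ 0)
    (h : ∑ j, vecMulVec (u j) (star (u j)) = vecMulVec y (star y)) :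
    ∃ c : Fin r → ℂ, (∀ j, u j = c j • y) ∧ ∑ j, (starRingEnd ℂ) (c j) * c j = 1 := by
  have hyy : (star y ⬝ᵥ y) ≠ 0 := fun h0 => hy (dotProduct_star_self_eq_zero.mp h0)
  have key : ∀ j, u j = ((star y ⬝ᵥ u j) / (star y ⬝ᵥ y)) • y := by
    intro j0
    set c : ℂ := (star y ⬝ᵥ u j0) / (star y ⬝ᵥ y) with hc
    set z : Fin m → ℂ := u j0 - c • y with hz
    have hyz : star y ⬝ᵥ z = 0 := by
      rw [hz]
      simp only [dotProduct_sub, dotProduct_smul, smul_eq_mul, hc]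
      field_simp
      simp
    have hzy : star z ⬝ᵥ y = 0 := by
      rw [star_dotProduct, hyz, star_zero]
    have hq := congrArg (fun A => star z ⬝ᵥ (A *ᵥ z)) h
    simp only [sum_mulVec'_s18, dotProduct_sum', quad_eval] at hq
    have hrhs : (starRingEnd ℂ) (star z ⬝ᵥ y) * (star z ⬝ᵥ y) = 0 := by
      rw [hzy]; simp
    rw [hrhs] at hq
    have hterm : ∀ j, star z ⬝ᵥ u j = 0 := by
      have hreal : ∑ j, Complex.normSq (star z ⬝ᵥ u j) = 0 := by
        have : ((∑ j, Complex.normSq (star z ⬝ᵥ u j) : ℝ) : ℂ) = 0 := by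
          push_cast
          rw [← hq]
          apply Finset.sum_congr rfl
          intro j _
          rw [Complex.normSq_eq_conj_mul_self]
        exact_mod_cast this
      intro j
      have := (Finset.sum_eq_zero_iff_of_nonneg
        (fun j _ => Complex.normSq_nonneg (star z ⬝ᵥ u j))).mp hreal j (Finset.mem_univ j)
      exact Complex.normSq_eq_zero.mp this
    have hzz : star z ⬝ᵥ z = 0 := by
      have h1 : star z ⬝ᵥ u j0 = 0 := hterm j0
      have h2 : star z ⬝ᵥ (c • y) = 0 := by
        rw [dotProduct_smul, hzy]; simp
      have : star z ⬝ᵥ (u j0 - c • y) = 0 := by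
        rw [dotProduct_sub, h1, h2, sub_zero]
      rwa [← hz] at this
    have : z = 0 := dotProduct_star_self_eq_zero.mp hzz
    have : u j0 - c • y = 0 := by rwa [← hz]
    linear_combination (norm := module) this
  refine ⟨fun j => (star y ⬝ᵥ u j) / (star y ⬝ᵥ y), key, ?_⟩
  obtain ⟨a, ha⟩ : ∃ a, y a ≠ 0 := Function.ne_iff.mp hy
  have hentry := congrFun (congrFun h a) a
  simp only [Matrix.sum_apply, vecMulVec_apply, Pi.star_apply] at hentry
  have hya : y a * star (y a) ≠ 0 := by
    exact mul_ne_zero ha (star_ne_zero.mpr ha)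
  have expand : ∀ j, u j a * star (u j a)
      = ((starRingEnd ℂ) ((star y ⬝ᵥ u j) / (star y ⬝ᵥ y)) * ((star y ⬝ᵥ u j) / (star y ⬝ᵥ y)))
        * (y a * star (y a)) := by
    intro j
    have := congrFun (key j) a
    rw [this]
    simp only [Pi.smul_apply, smul_eq_mul, starRingEnd_apply, star_mul', star_div₀]
    ring
  rw [Finset.sum_congr rfl (fun j _ => expand j), ← Finset.sum_mul] at hentry
  exact mul_right_cancel₀ hya (by rw [hentry, one_mul])

private lemma conj_rank1 {m n : ℕ} (F : Matrix (Fin m) (Fin n) ℂ) (a : Fin n → ℂ) :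
    F * vecMulVec a (star a) * Fᴴ = vecMulVec (F *ᵥ a) (star (F *ᵥ a)) := by
  rw [vecMulVec_eq (Fin 1), vecMulVec_eq (Fin 1)]
  rw [Matrix.mul_assoc, Matrix.mul_assoc, ← Matrix.mul_assoc F]
  congr 1
  all_goals
    ext i j
    simp only [mul_apply, replicateCol_apply, replicateRow_apply, conjTranspose_apply, Pi.star_apply, mulVec,
      dotProduct, star_sum, star_mul']
    exact Finset.sum_congr rfl fun b _ => by ring

private lemma had_MYY {m k r : ℕ} (Y : Matrix (Fin m) (Fin k) ℂ) (c : Fin k → Fin r → ℂ) :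
    Matrix.hadamard (Matrix.of fun i l => ∑ j, (starRingEnd ℂ) (c i j) * c l j) (Yᴴ * Y)
      = ∑ j, (Y * diagonal (fun l => c l j))ᴴ * (Y * diagonal (fun l => c l j)) := by
  have e : ∀ j : Fin r, (Y * diagonal (fun l => c l j))ᴴ * (Y * diagonal (fun l => c l j))
      = diagonal (fun l => star (c l j)) * (Yᴴ * Y) * diagonal (fun l => c l j) := by
    intro j
    simp only [conjTranspose_mul, diagonal_conjTranspose, Matrix.mul_assoc]
    rfl
  rw [Finset.sum_congr rfl (fun j _ => e j)]
  ext i l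
  simp only [hadamard_apply, Matrix.of_apply, Matrix.sum_apply, diagonal_mul, mul_diagonal,
    Finset.sum_mul]
  refine Finset.sum_congr rfl fun j _ => ?_
  simp only [starRingEnd_apply, Pi.star_apply]
  ring

private lemma had_MG {k r : ℕ} (G : Matrix (Fin k) (Fin k) ℂ) (c : Fin k → Fin r → ℂ) :
    Matrix.hadamard ((Matrix.of fun i l => ∑ j, (starRingEnd ℂ) (c i j) * c l j).map
        (starRingEnd ℂ)) G
      = ∑ j, diagonal (fun l => c l j) * G * (diagonal (fun l => c l j))ᴴ := by
  ext i l
  simp only [hadamard_apply, Matrix.map_apply, Matrix.of_apply, Matrix.sum_apply,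
    diagonal_conjTranspose, diagonal_mul, mul_diagonal, map_sum,
    Finset.sum_mul]
  simp only [starRingEnd_apply, Pi.star_apply, star_mul', star_star]
  exact Finset.sum_congr rfl fun j _ => by ring

private lemma posSemidef_sum {p r : ℕ} (A : Fin r → Matrix (Fin p) (Fin p) ℂ)
    (h : ∀ j, (A j).PosSemidef) : (∑ j, A j).PosSemidef := by
  classical
  refine Finset.sum_induction A Matrix.PosSemidef (fun a b ha hb => ha.add hb)
    (Matrix.PosSemidef.zero) (fun j _ => h j)


private lemma dot_conj_sq {p q : ℕ} (A : Matrix (Fin p) (Fin q) ℂ) (v : Fin q → ℂ) :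
    star v ⬝ᵥ ((Aᴴ * A) *ᵥ v) = star (A *ᵥ v) ⬝ᵥ (A *ᵥ v) := by
  rw [← Matrix.mulVec_mulVec, Matrix.dotProduct_mulVec, ← Matrix.star_mulVec]

private lemma sum_dot_zero {p r : ℕ} (u : Fin r → Fin p → ℂ)
    (h : ∑ j, star (u j) ⬝ᵥ (u j) = 0) : ∀ j, u j = 0 := by
  have hreal : ∑ j, (∑ a, Complex.normSq (u j a)) = 0 := by
    have : ((∑ j, ∑ a, Complex.normSq (u j a) : ℝ) : ℂ) = 0 := by
      push_cast
      rw [← h]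
      refine Finset.sum_congr rfl fun j _ => ?_
      simp [dotProduct, Complex.normSq_eq_conj_mul_self]
    exact_mod_cast this
  intro j
  have h1 := (Finset.sum_eq_zero_iff_of_nonneg
    (fun j _ => Finset.sum_nonneg fun a _ => Complex.normSq_nonneg (u j a))).mp hreal j
    (Finset.mem_univ j)
  ext a
  have h2 := (Finset.sum_eq_zero_iff_of_nonneg
    (fun a _ => Complex.normSq_nonneg (u j a))).mp h1 a (Finset.mem_univ a)
  simpa using Complex.normSq_eq_zero.mp h2

open scoped MatrixOrder in
private theorem psd_sqrt_ex {k : ℕ} {M : Matrix (Fin k) (Fin k) ℂ} (hM : M.PosSemidef) :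
    ∃ S : Matrix (Fin k) (Fin k) ℂ, Sᴴ = S ∧ S * S = M :=
  ⟨CFC.sqrt M, (CFC.sqrt_nonneg M).posSemidef.1, CFC.sqrt_mul_sqrt_self M hM.nonneg⟩

private noncomputable def psdS {k : ℕ} {M : Matrix (Fin k) (Fin k) ℂ} (hM : M.PosSemidef) :
    Matrix (Fin k) (Fin k) ℂ := Classical.choose (psd_sqrt_ex hM)

private theorem psdS_spec {k : ℕ} {M : Matrix (Fin k) (Fin k) ℂ} (hM : M.PosSemidef) :
    (psdS hM)ᴴ = psdS hM ∧ psdS hM * psdS hM = M := Classical.choose_spec (psd_sqrt_ex hM)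

/-- A completely positive map `T` with `T(Iₙ) = B` and `T(xᵢxᵢᴴ) = yᵢyᵢᴴ` exists iff
there is a positive semidefinite `M` with unit diagonal such that
(1) `ker XᴴX ⊆ ker (M ∘ YᴴY)` and (2) `Y(M̄ ∘ (XᴴX)⁺)Yᴴ ≤ B` (with equality if
`X` has rank `n`), where `(XᴴX)⁺ = G` is the Moore–Penrose inverse of `XᴴX`. -/
theorem stmt_18 {n m k : ℕ} (x : Fin k → Fin n → ℂ) (y : Fin k → Fin m → ℂ)
    (hx : ∀ i, x i ≠ 0) (hy : ∀ i, y i ≠ 0)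
    (B : Matrix (Fin m) (Fin m) ℂ) (hB : B.PosSemidef)
    (X : Matrix (Fin n) (Fin k) ℂ) (hX : X = Matrix.of fun a i => x i a)
    (Y : Matrix (Fin m) (Fin k) ℂ) (hY : Y = Matrix.of fun a i => y i a)
    (G : Matrix (Fin k) (Fin k) ℂ)
    (hG1 : (Xᴴ * X) * G * (Xᴴ * X) = Xᴴ * X) (hG2 : G * (Xᴴ * X) * G = G)
    (hG3 : ((Xᴴ * X) * G)ᴴ = (Xᴴ * X) * G) (hG4 : (G * (Xᴴ * X))ᴴ = G * (Xᴴ * X)) :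
    (∃ (r : ℕ) (F : Fin r → Matrix (Fin m) (Fin n) ℂ),
        (∑ j, F j * (F j)ᴴ) = B ∧
        ∀ i, (∑ j, F j * vecMulVec (x i) (star (x i)) * (F j)ᴴ) =
          vecMulVec (y i) (star (y i))) ↔
    (∃ M : Matrix (Fin k) (Fin k) ℂ, M.PosSemidef ∧ (∀ i, M i i = 1) ∧
        (∀ v : Fin k → ℂ, (Xᴴ * X) *ᵥ v = 0 → Matrix.hadamard M (Yᴴ * Y) *ᵥ v = 0) ∧
        (B - Y * Matrix.hadamard (M.map (starRingEnd ℂ)) G * Yᴴ).PosSemidef ∧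
        (X.rank = n → B = Y * Matrix.hadamard (M.map (starRingEnd ℂ)) G * Yᴴ)) := by
  have hGh : Gᴴ = G := mp_herm (Xᴴ*X) G (by simp [conjTranspose_mul]) hG1 hG2 hG3 hG4
  have h5 : X * G * (Xᴴ * X) = X := xgx X G hGh hG1
  have hPX : (X * G * Xᴴ) * X = X :=
    (Matrix.mul_assoc (X*G) Xᴴ X).trans h5
  constructor
  · rintro ⟨r, F, hsum, hint⟩
    have hint' : ∀ i, ∑ j, vecMulVec (F j *ᵥ x i) (star (F j *ᵥ x i))
        = vecMulVec (y i) (star (y i)) := by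
      intro i
      simpa only [conj_rank1] using hint i
    choose c hc1 hc2 using fun i => rank1_sum (fun j => F j *ᵥ x i) (y i) (hy i) (hint' i)
    have s1 : ∀ j, F j * X = Y * diagonal (fun l => c l j) := by
      intro j
      ext a i
      have h1 : (F j * X) a i = (F j *ᵥ x i) a := by
        rw [hX]; simp only [mul_apply, Matrix.of_apply, mulVec, dotProduct]
      rw [h1, hc1 i j, hY]
      simp [mul_diagonal, mul_comm]
    have e2 : Y * Matrix.hadamard ((Matrix.of fun i l =>
          ∑ j, (starRingEnd ℂ) (c i j) * c l j).map (starRingEnd ℂ)) G * Yᴴ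
        = ∑ j, F j * (X * G * Xᴴ) * (F j)ᴴ := by
      rw [had_MG G c, Matrix.mul_sum, Matrix.sum_mul]
      refine Finset.sum_congr rfl fun j _ => ?_
      have h1 : F j * (X * G * Xᴴ) * (F j)ᴴ = (F j * X) * G * (F j * X)ᴴ := by
        simp only [conjTranspose_mul, Matrix.mul_assoc]
      rw [h1, s1 j]
      simp only [conjTranspose_mul, Matrix.mul_assoc]
    refine ⟨Matrix.of fun i l => ∑ j, (starRingEnd ℂ) (c i j) * c l j, ?_, ?_, ?_, ?_, ?_⟩
    · have : (Matrix.of fun i l => ∑ j, (starRingEnd ℂ) (c i j) * c l j)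
          = (Matrix.of fun (j : Fin r) (i : Fin k) => c i j)ᴴ
            * (Matrix.of fun (j : Fin r) (i : Fin k) => c i j) := by
        ext i l
        simp only [Matrix.of_apply, mul_apply, conjTranspose_apply, starRingEnd_apply]
      rw [this]
      exact posSemidef_conjTranspose_mul_self _
    · intro i
      simpa using hc2 i
    · -- kernel condition
      intro v hv
      have hXv : X *ᵥ v = 0 := by
        have h0 : star (X *ᵥ v) ⬝ᵥ (X *ᵥ v) = 0 := by
          rw [star_mulVec, ← dotProduct_mulVec, Matrix.mulVec_mulVec, hv, dotProduct_zero]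
        exact dotProduct_star_self_eq_zero.mp h0
      rw [had_MYY Y c, sum_mulVec'_s18]
      apply Finset.sum_eq_zero
      intro j _
      rw [← s1 j, ← Matrix.mulVec_mulVec, ← Matrix.mulVec_mulVec, hXv, mulVec_zero,
        mulVec_zero]
    · -- PSD condition
      have key : B - Y * Matrix.hadamard ((Matrix.of fun i l =>
            ∑ j, (starRingEnd ℂ) (c i j) * c l j).map (starRingEnd ℂ)) G * Yᴴ
          = ∑ j, (F j * (1 - X*G*Xᴴ)) * (F j * (1 - X*G*Xᴴ))ᴴ := by
        calc B - Y * Matrix.hadamard ((Matrix.of fun i l =>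
              ∑ j, (starRingEnd ℂ) (c i j) * c l j).map (starRingEnd ℂ)) G * Yᴴ
            = (∑ j, F j * (F j)ᴴ) - ∑ j, F j * (X * G * Xᴴ) * (F j)ᴴ := by rw [hsum, e2]
          _ = ∑ j, (F j * (F j)ᴴ - F j * (X * G * Xᴴ) * (F j)ᴴ) := by
              rw [Finset.sum_sub_distrib]
          _ = ∑ j, (F j * (1 - X*G*Xᴴ)) * (F j * (1 - X*G*Xᴴ))ᴴ := by
              refine Finset.sum_congr rfl fun j _ => ?_
              have e3 : F j * (1 - X*G*Xᴴ) * (F j * (1 - X*G*Xᴴ))ᴴ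
                  = F j * ((1 - X*G*Xᴴ) * (1 - X*G*Xᴴ)ᴴ) * (F j)ᴴ := by
                simp only [conjTranspose_mul, Matrix.mul_assoc]
              rw [e3, proj_prod X G hGh hPX, Matrix.mul_sub, Matrix.mul_one, Matrix.sub_mul]
      rw [key]
      exact posSemidef_sum _ fun j => posSemidef_self_mul_conjTranspose _
    · -- equality under rank condition
      intro hrank
      have hP1 := projP_one X G hPX hrank
      rw [e2, hP1]
      simp only [Matrix.mul_one]
      exact hsum.symm
  · rintro ⟨M, hM, hMdiag, hker, hpsd2, heq⟩
    set c : Fin k → Fin k → ℂ := fun i j => psdS hM j i with hc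
    have hCh : (psdS hM)ᴴ = psdS hM := (psdS_spec hM).1
    have hMc : M = Matrix.of fun i l => ∑ j, (starRingEnd ℂ) (c i j) * c l j := by
      have h0 : M = (psdS hM)ᴴ * psdS hM := by rw [hCh, (psdS_spec hM).2]
      rw [h0]; ext i l
      simp only [Matrix.of_apply, mul_apply, conjTranspose_apply, hc, starRingEnd_apply]
    have hone : ∀ i, ∑ j, c i j * star (c i j) = 1 := by
      intro i
      have h1 := hMdiag i
      rw [hMc] at h1
      simp only [Matrix.of_apply] at h1
      rw [← h1]
      exact Finset.sum_congr rfl fun j _ => by rw [starRingEnd_apply]; ring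
    have t1 : ∀ v : Fin k → ℂ, (Xᴴ * X) *ᵥ v = 0 →
        ∀ j, (Y * diagonal (fun l => c l j)) *ᵥ v = 0 := by
      intro v hv
      have h0 := hker v hv
      rw [hMc, had_MYY Y c] at h0
      apply sum_dot_zero
      have hq := congrArg (fun w => star v ⬝ᵥ w) h0
      simp only [sum_mulVec'_s18, dotProduct_sum', dotProduct_zero] at hq
      rw [← hq]
      exact Finset.sum_congr rfl fun j _ => (dot_conj_sq _ v).symm
    have hZ : (Xᴴ*X) * (G * (Xᴴ*X) - 1) = 0 := by
      rw [Matrix.mul_sub, Matrix.mul_one, ← Matrix.mul_assoc, hG1, sub_self]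
    have t2 : ∀ j, (Y * diagonal (fun l => c l j) * G * Xᴴ) * X
        = Y * diagonal (fun l => c l j) := by
      intro j
      have hcol : ∀ i, (Xᴴ*X) *ᵥ (fun b => (G * (Xᴴ*X) - 1 : Matrix (Fin k) (Fin k) ℂ) b i) = 0 := by
        intro i
        ext b
        have h3 := congrFun (congrFun hZ b) i
        simpa [mul_apply, mulVec, dotProduct] using h3
      have hzero : Y * diagonal (fun l => c l j) * (G * (Xᴴ*X) - 1) = 0 := by
        ext a i
        have h3 := congrFun (t1 (fun b => (G * (Xᴴ*X) - 1 : Matrix (Fin k) (Fin k) ℂ) b i) (hcol i) j) a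
        simpa [mul_apply, mulVec, dotProduct] using h3
      rw [Matrix.mul_sub, Matrix.mul_one, sub_eq_zero] at hzero
      calc (Y * diagonal (fun l => c l j) * G * Xᴴ) * X
          = Y * diagonal (fun l => c l j) * (G * (Xᴴ*X)) := by
            simp only [Matrix.mul_assoc]
        _ = Y * diagonal (fun l => c l j) := hzero
    have hFx : ∀ j i, (Y * diagonal (fun l => c l j) * G * Xᴴ) *ᵥ x i = c i j • y i := by
      intro j i
      have hcol : ∀ (A : Matrix (Fin m) (Fin n) ℂ), A *ᵥ x i = fun a => (A * X) a i := by
        intro A; ext a; rw [hX]; simp only [mul_apply, Matrix.of_apply, mulVec, dotProduct]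
      rw [hcol, t2 j]
      ext a
      rw [hY]
      simp [mul_diagonal, mul_comm]
    have hFsum : ∑ j : Fin k, (Y * diagonal (fun l => c l j) * G * Xᴴ)
          * (Y * diagonal (fun l => c l j) * G * Xᴴ)ᴴ
        = Y * Matrix.hadamard (M.map (starRingEnd ℂ)) G * Yᴴ := by
      rw [hMc, had_MG G c, Matrix.mul_sum, Matrix.sum_mul]
      refine Finset.sum_congr rfl fun j _ => ?_
      have e1 : (Y * diagonal (fun l => c l j) * G * Xᴴ)
            * (Y * diagonal (fun l => c l j) * G * Xᴴ)ᴴ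
          = Y * diagonal (fun l => c l j) * (G * (Xᴴ*X) * G)
            * (diagonal (fun l => c l j))ᴴ * Yᴴ := by
        simp only [conjTranspose_mul, conjTranspose_conjTranspose, hGh, Matrix.mul_assoc]
      rw [e1, hG2]
      simp only [Matrix.mul_assoc]
    have hsum1 : ∀ i, ∑ j : Fin k, vecMulVec (c i j • y i) (star (c i j • y i))
        = vecMulVec (y i) (star (y i)) := by
      intro i
      have e2 : ∀ j, vecMulVec (c i j • y i) (star (c i j • y i))
          = (c i j * star (c i j)) • vecMulVec (y i) (star (y i)) := by
        intro j
        ext a b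
        simp only [vecMulVec_apply, Pi.smul_apply, smul_eq_mul, Pi.star_apply, star_mul',
          Matrix.smul_apply]
        ring
      rw [Finset.sum_congr rfl fun j _ => e2 j, ← Finset.sum_smul, hone i, one_smul]
    obtain ⟨E, hEX, hEE⟩ : ∃ E : Fin m → Matrix (Fin m) (Fin n) ℂ,
        (∀ t i, E t *ᵥ x i = 0) ∧
        ∑ t, E t * (E t)ᴴ = B - Y * Matrix.hadamard (M.map (starRingEnd ℂ)) G * Yᴴ := by
      by_cases hrk : X.rank = n
      · exact ⟨fun _ => 0, fun t i => by simp, by rw [← heq hrk]; simp⟩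
      · -- find w ≠ 0 in the kernel of Xᴴ
        have hle : X.rank ≤ n := by
          simpa using X.rank_le_height
        have hlt : X.rank < n := lt_of_le_of_ne hle hrk
        have hker' : LinearMap.ker (Xᴴ).mulVecLin ≠ ⊥ := by
          intro hbot
          have h1 := (Xᴴ).mulVecLin.finrank_range_add_finrank_ker
          rw [hbot] at h1
          simp only [finrank_bot, add_zero] at h1
          rw [show Module.finrank ℂ (LinearMap.range (Xᴴ).mulVecLin) = (Xᴴ).rank from rfl,
            Matrix.rank_conjTranspose] at h1
          simp only [Module.finrank_fintype_fun_eq_card, Fintype.card_fin] at h1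
          omega
        obtain ⟨w, hwker, hw0⟩ := (Submodule.ne_bot_iff _).mp hker'
        have hXw : Xᴴ *ᵥ w = 0 := hwker
        set R := B - Y * Matrix.hadamard (M.map (starRingEnd ℂ)) G * Yᴴ with hR
        have hRps : R.PosSemidef := hpsd2
        have hSh : (psdS hRps)ᴴ = psdS hRps := (psdS_spec hRps).1
        have hSS : psdS hRps * psdS hRps = R := (psdS_spec hRps).2
        set S := psdS hRps with hS
        set βr : ℝ := ∑ b, Complex.normSq (w b) with hβ
        have hβpos : 0 < βr := by
          obtain ⟨b, hb⟩ := Function.ne_iff.mp hw0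
          exact Finset.sum_pos' (fun b _ => Complex.normSq_nonneg _)
            ⟨b, Finset.mem_univ b, Complex.normSq_pos.mpr hb⟩
        set γ : ℂ := ((Real.sqrt βr : ℝ) : ℂ)⁻¹ with hγdef
        have hwb : (∑ b, star (w b) * w b) = (βr : ℂ) := by
          rw [hβ]
          push_cast
          exact Finset.sum_congr rfl fun b _ => by
            rw [Complex.normSq_eq_conj_mul_self]; rfl
        have hγβ : γ * star γ * (βr : ℂ) = 1 := by
          have hsq : ((Real.sqrt βr)⁻¹ * (Real.sqrt βr)⁻¹ * βr : ℝ) = 1 := by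
            rw [← mul_inv, Real.mul_self_sqrt hβpos.le]
            field_simp
          rw [hγdef]
          rw [show star (((Real.sqrt βr : ℝ) : ℂ)⁻¹) = ((Real.sqrt βr : ℝ) : ℂ)⁻¹ by simp]
          rw [← Complex.ofReal_inv, ← Complex.ofReal_mul, ← Complex.ofReal_mul, hsq,
            Complex.ofReal_one]
        refine ⟨fun t => Matrix.of fun a b => γ * S a t * star (w b), ?_, ?_⟩
        · intro t i
          ext a
          have hXwi := congrFun hXw i
          have hwx : ∑ b, star (w b) * x i b = 0 := by
            have h2 : star ((Xᴴ *ᵥ w) i) = 0 := by rw [hXwi]; simp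
            rw [← h2, hX]
            simp only [mulVec, dotProduct, star_sum, star_mul', conjTranspose_apply,
              Matrix.of_apply, star_star]
            exact Finset.sum_congr rfl fun b _ => by ring
          simp only [mulVec, dotProduct, Matrix.of_apply, Pi.zero_apply]
          calc ∑ b, γ * S a t * star (w b) * x i b
              = γ * S a t * ∑ b, star (w b) * x i b := by
                rw [Finset.mul_sum]
                exact Finset.sum_congr rfl fun b _ => by ring
            _ = 0 := by rw [hwx, mul_zero]
        · have hEEt : ∀ t, (Matrix.of fun a b => γ * S a t * star (w b))
              * (Matrix.of fun a b => γ * S a t * star (w b))ᴴ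
              = Matrix.of fun a a' => S a t * star (S a' t) := by
            intro t
            ext a a'
            simp only [mul_apply, conjTranspose_apply, Matrix.of_apply]
            have e3 : ∀ b, γ * S a t * star (w b) * star (γ * S a' t * star (w b))
                = ((γ * star γ) * (S a t * star (S a' t))) * (star (w b) * w b) := by
              intro b
              simp only [star_mul', star_star]
              ring
            rw [Finset.sum_congr rfl fun b _ => e3 b, ← Finset.mul_sum, hwb]
            linear_combination (S a t * star (S a' t)) * hγβ
          rw [Finset.sum_congr rfl fun t _ => hEEt t]
          have e4 : ∑ t, (Matrix.of fun a a' => S a t * star (S a' t)) = S * Sᴴ := by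
            ext a a'
            simp only [Matrix.sum_apply, Matrix.of_apply, mul_apply, conjTranspose_apply]
          rw [e4, hSh, hSS]
    refine ⟨k + m, Fin.append (fun j => Y * diagonal (fun l => c l j) * G * Xᴴ) E, ?_, ?_⟩
    · rw [Fin.sum_univ_add]
      simp only [Fin.append_left, Fin.append_right]
      rw [hFsum, hEE]
      abel
    · intro i
      rw [Fin.sum_univ_add]
      simp only [Fin.append_left, Fin.append_right, conj_rank1]
      rw [show ∑ t : Fin m, vecMulVec (E t *ᵥ x i) (star (E t *ᵥ x i)) = 0 from
        Finset.sum_eq_zero fun t _ => by rw [hEX t i]; ext a b; simp [vecMulVec_apply]]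
      rw [add_zero]
      rw [show (fun j : Fin k => vecMulVec ((Y * diagonal (fun l => c l j) * G * Xᴴ) *ᵥ x i)
            (star ((Y * diagonal (fun l => c l j) * G * Xᴴ) *ᵥ x i)))
          = fun j => vecMulVec (c i j • y i) (star (c i j • y i)) from
        funext fun j => by rw [hFx j i]]
      exact hsum1 i
end
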